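/- For diagrams τ, ρ, ι in the partition monoid Pₙ with ι ⋆-self-dual and all ranks of τ∘ρ∘ι, ρ∘ι, and ι equal, the permutations recording propagating-line connections satisfy π_{τ∘ρ∘ι} π_ι = π_{τ∘(ρ∘ι∘ρ⋆)} π_{ρ∘ι∘ρ⋆} π_{ρ∘ι} π_ι in the symmetric group S_{r(ι)}. -/

import Mathlib

open scoped Classical
open Relation
noncomputable section

/-- Vertices of a diagram: `inl` = unprimed points `n̄`, `inr` = primed points `n̄'`. -/
abbrev DVert (n : ℕ) := Fin n ⊕ Fin n

/-- Tripled vertex set used for gluing: bottom (unprimed of the right factor),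
middle (identified vertices), top (primed of the left factor). -/
abbrev TVert (n : ℕ) := Fin n ⊕ (Fin n ⊕ Fin n)

def embBot (n : ℕ) : DVert n → TVert n := Sum.elim Sum.inl (fun i => Sum.inr (Sum.inl i))
def embTop (n : ℕ) : DVert n → TVert n :=
  Sum.elim (fun i => Sum.inr (Sum.inl i)) (fun i => Sum.inr (Sum.inr i))
def embOut (n : ℕ) : DVert n → TVert n := Sum.elim Sum.inl (fun i => Sum.inr (Sum.inr i))

/-- The minimal equivalence relation `χ` on the tripled vertex set containing
(the embedded copies of) `τ` and `ρ`. -/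
def glue (n : ℕ) (τ ρ : Setoid (DVert n)) : Setoid (TVert n) :=
  EqvGen.setoid (fun x y =>
    (∃ a b, ρ.r a b ∧ x = embBot n a ∧ y = embBot n b) ∨
    (∃ a b, τ.r a b ∧ x = embTop n a ∧ y = embTop n b))

/-- Composition `τ ∘ ρ` in the partition monoid: glue and restrict to the outer vertices. -/
def pcomp (n : ℕ) (τ ρ : Setoid (DVert n)) : Setoid (DVert n) where
  r x y := (glue n τ ρ).r (embOut n x) (embOut n y)
  iseqv := ⟨fun _ => (glue n τ ρ).iseqv.refl _, fun h => (glue n τ ρ).iseqv.symm h,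
    fun h₁ h₂ => (glue n τ ρ).iseqv.trans h₁ h₂⟩

/-- A middle vertex of the tripled vertex set. -/
def isMiddle {n : ℕ} (x : TVert n) : Prop := ∃ i, x = Sum.inr (Sum.inl i)

/-- `c(τ,ρ)`: the number of classes of the glued relation contained in the middle row. -/
def ccount (n : ℕ) (τ ρ : Setoid (DVert n)) : ℕ :=
  {C ∈ (glue n τ ρ).classes | ∀ x ∈ C, isMiddle x}.ncard

/-- A propagating part: one meeting both the unprimed and the primed vertices. -/
def IsPropagating {n : ℕ} (C : Set (DVert n)) : Prop :=
  (∃ i, Sum.inl i ∈ C) ∧ (∃ i, Sum.inr i ∈ C)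

/-- The rank `r(σ)`: the number of propagating parts of `σ`. -/
def prank (n : ℕ) (σ : Setoid (DVert n)) : ℕ :=
  {C ∈ σ.classes | IsPropagating C}.ncard

/-- The anti-involution `⋆` swapping primed and unprimed vertices. -/
def pstar (n : ℕ) (σ : Setoid (DVert n)) : Setoid (DVert n) where
  r x y := σ.r x.swap y.swap
  iseqv := ⟨fun _ => σ.iseqv.refl _, fun h => σ.iseqv.symm h,
    fun h₁ h₂ => σ.iseqv.trans h₁ h₂⟩

/-- Minimal unprimed vertex of a part. -/
def minL {n : ℕ} (C : Set (DVert n)) : ℕ :=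
  sInf {m : ℕ | ∃ j : Fin n, (j : ℕ) = m ∧ Sum.inl j ∈ C}

/-- Minimal primed vertex of a part. -/
def minR {n : ℕ} (C : Set (DVert n)) : ℕ :=
  sInf {m : ℕ | ∃ j : Fin n, (j : ℕ) = m ∧ Sum.inr j ∈ C}

/-- Position of a propagating part `C` of `σ` in the ordering (by minimal elements) of the
intersections of the propagating parts with the unprimed vertices. -/
def posL (n : ℕ) (σ : Setoid (DVert n)) (C : Set (DVert n)) : ℕ :=
  {D ∈ σ.classes | IsPropagating D ∧ minL D < minL C}.ncard

/-- Position of a propagating part `C` of `σ` in the ordering (by minimal elements) of the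
intersections of the propagating parts with the primed vertices. -/
def posR (n : ℕ) (σ : Setoid (DVert n)) (C : Set (DVert n)) : ℕ :=
  {D ∈ σ.classes | IsPropagating D ∧ minR D < minR C}.ncard

/-- The permutation `π_σ ∈ S_k` recording how propagating lines connect the two sides of `σ`
(for a diagram of rank `k`): the unique permutation sending the position of a propagating part
on the unprimed side to its position on the primed side. -/
def permAt (n k : ℕ) (σ : Setoid (DVert n)) : Equiv.Perm (Fin k) :=
  Classical.epsilon (fun π : Equiv.Perm (Fin k) =>
    ∀ C ∈ σ.classes, IsPropagating C → ∀ h : posL n σ C < k,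
      ((π ⟨posL n σ C, h⟩ : Fin k) : ℕ) = posR n σ C)

/-- The product of the partition algebra `𝐏ₙ(δ)` on the free vector space on diagrams. -/
def pmul (n : ℕ) (δ : ℂ) (f g : Setoid (DVert n) →₀ ℂ) : Setoid (DVert n) →₀ ℂ :=
  f.sum fun τ a => g.sum fun ρ b =>
    Finsupp.single (pcomp n τ ρ) (δ ^ ccount n τ ρ * (a * b))

/-- `i(π,s)`: the number of pairs `i < j` with `s i = j` and `π i > π j`. -/
def icount (n : ℕ) (π s : Equiv.Perm (Fin n)) : ℕ :=
  (Finset.univ.filter fun p : Fin n × Fin n => p.1 < p.2 ∧ s p.1 = p.2 ∧ π p.2 < π p.1).card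


theorem Set.mem_def {α : Type*} {a : α} {s : Set α} : a ∈ s ↔ s a := Iff.rfl

namespace PP
variable {n : ℕ}

/-! ### Basic setoid constructions -/

/-- lift a setoid on `Fin n` to the primed (right) vertices -/
def upS (s : Setoid (Fin n)) : Setoid (DVert n) where
  r x y := x = y ∨ ∃ p q, s p q ∧ x = Sum.inr p ∧ y = Sum.inr q
  iseqv := by
    refine ⟨fun x => Or.inl rfl, ?_, ?_⟩
    · rintro x y (rfl | ⟨p, q, h, rfl, rfl⟩)
      · exact Or.inl rfl
      · exact Or.inr ⟨q, p, s.symm' h, rfl, rfl⟩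
    · rintro x y z (rfl | ⟨p, q, h, rfl, rfl⟩) hyz
      · exact hyz
      · rcases hyz with h2 | ⟨p', q', h', he, rfl⟩
        · exact h2 ▸ Or.inr ⟨p, q, h, rfl, rfl⟩
        · cases Sum.inr.inj he
          exact Or.inr ⟨p, q', s.trans' h h', rfl, rfl⟩

/-- lift a setoid on `Fin n` to the unprimed (left) vertices -/
def downS (s : Setoid (Fin n)) : Setoid (DVert n) where
  r x y := x = y ∨ ∃ p q, s p q ∧ x = Sum.inl p ∧ y = Sum.inl q
  iseqv := by
    refine ⟨fun x => Or.inl rfl, ?_, ?_⟩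
    · rintro x y (rfl | ⟨p, q, h, rfl, rfl⟩)
      · exact Or.inl rfl
      · exact Or.inr ⟨q, p, s.symm' h, rfl, rfl⟩
    · rintro x y z (rfl | ⟨p, q, h, rfl, rfl⟩) hyz
      · exact hyz
      · rcases hyz with h2 | ⟨p', q', h', he, rfl⟩
        · exact h2 ▸ Or.inr ⟨p, q, h, rfl, rfl⟩
        · cases Sum.inl.inj he
          exact Or.inr ⟨p, q', s.trans' h h', rfl, rfl⟩

/-- bottom (unprimed) trace of a diagram -/
def BtS (σ : Setoid (DVert n)) : Setoid (Fin n) :=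
  ⟨fun p q => σ (Sum.inl p) (Sum.inl q),
    ⟨fun _ => σ.refl' _, σ.symm', σ.trans'⟩⟩

/-- top (primed) trace of a diagram -/
def TpS (σ : Setoid (DVert n)) : Setoid (Fin n) :=
  ⟨fun p q => σ (Sum.inr p) (Sum.inr q),
    ⟨fun _ => σ.refl' _, σ.symm', σ.trans'⟩⟩

@[simp] theorem BtS_iff (σ : Setoid (DVert n)) (p q : Fin n) :
    BtS σ p q ↔ σ (Sum.inl p) (Sum.inl q) := Iff.rfl
@[simp] theorem TpS_iff (σ : Setoid (DVert n)) (p q : Fin n) :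
    TpS σ p q ↔ σ (Sum.inr p) (Sum.inr q) := Iff.rfl
@[simp] theorem upS_inr_iff (s : Setoid (Fin n)) (p q : Fin n) :
    upS s (Sum.inr p) (Sum.inr q) ↔ s p q := by
  constructor
  · rintro (h | ⟨p', q', h, he1, he2⟩)
    · cases Sum.inr.inj h; exact s.refl' _
    · cases Sum.inr.inj he1; cases Sum.inr.inj he2; exact h
  · intro h; exact Or.inr ⟨p, q, h, rfl, rfl⟩
@[simp] theorem downS_inl_iff (s : Setoid (Fin n)) (p q : Fin n) :
    downS s (Sum.inl p) (Sum.inl q) ↔ s p q := by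
  constructor
  · rintro (h | ⟨p', q', h, he1, he2⟩)
    · cases Sum.inl.inj h; exact s.refl' _
    · cases Sum.inl.inj he1; cases Sum.inl.inj he2; exact h
  · intro h; exact Or.inr ⟨p, q, h, rfl, rfl⟩

theorem sup_left' {γ : Type*} {s t : Setoid γ} {x y : γ} (h : s x y) : (s ⊔ t) x y :=
  (le_sup_left : s ≤ s ⊔ t) h
theorem sup_right' {γ : Type*} {s t : Setoid γ} {x y : γ} (h : t x y) : (s ⊔ t) x y :=
  (le_sup_right : t ≤ s ⊔ t) h

/-- the membership setoid of a set -/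
def memSetoid {V : Type*} (Z : Set V) : Setoid V :=
  ⟨fun x y => x ∈ Z ↔ y ∈ Z, ⟨fun _ => Iff.rfl, Iff.symm, Iff.trans⟩⟩

theorem eqvgen_class_eq {V : Type*} (g : V → V → Prop) (Z : Set V)
    (sat : ∀ x y, g x y → (x ∈ Z ↔ y ∈ Z)) {v : V} (hv : v ∈ Z)
    (rel : ∀ z ∈ Z, (EqvGen.setoid g) v z) :
    ∀ w, (EqvGen.setoid g) v w ↔ w ∈ Z := by
  intro w
  constructor
  · intro h
    have key : EqvGen.setoid g ≤ memSetoid Z := Setoid.eqvGen_le sat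
    exact (key h).mp hv
  · exact rel w

/-! ### description of `b ⊔ upS s` -/

section UpSup
variable (b : Setoid (DVert n)) (s : Setoid (Fin n))

/-- candidate description of `b ⊔ upS s` -/
def theta : Setoid (DVert n) where
  r x y :=
    match x, y with
    | Sum.inl a, Sum.inl c =>
        b (Sum.inl a) (Sum.inl c) ∨
          ∃ p q, b (Sum.inl a) (Sum.inr p) ∧ (TpS b ⊔ s) p q ∧ b (Sum.inr q) (Sum.inl c)
    | Sum.inl a, Sum.inr w => ∃ p, b (Sum.inl a) (Sum.inr p) ∧ (TpS b ⊔ s) p w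
    | Sum.inr v, Sum.inl c => ∃ q, (TpS b ⊔ s) v q ∧ b (Sum.inr q) (Sum.inl c)
    | Sum.inr v, Sum.inr w => (TpS b ⊔ s) v w
  iseqv := by
    set t := TpS b ⊔ s with ht
    constructor
    · rintro (a | v)
      · exact Or.inl (b.refl' _)
      · exact t.refl' _
    · rintro (a | v) (c | w) h
      · rcases h with h | ⟨p, q, h1, h2, h3⟩
        · exact Or.inl (b.symm' h)
        · exact Or.inr ⟨q, p, b.symm' h3, t.symm' h2, b.symm' h1⟩
      · rcases h with ⟨p, h1, h2⟩
        exact ⟨p, t.symm' h2, b.symm' h1⟩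
      · rcases h with ⟨q, h1, h2⟩
        exact ⟨q, b.symm' h2, t.symm' h1⟩
      · exact t.symm' h
    · rintro (a | v) (c | w) (e | u) h h'
      · rcases h with h | ⟨p, q, h1, h2, h3⟩
        · rcases h' with h' | ⟨p', q', h1', h2', h3'⟩
          · exact Or.inl (b.trans' h h')
          · exact Or.inr ⟨p', q', b.trans' h h1', h2', h3'⟩
        · rcases h' with h' | ⟨p', q', h1', h2', h3'⟩
          · exact Or.inr ⟨p, q, h1, h2, b.trans' h3 h'⟩
          · refine Or.inr ⟨p, q', h1, ?_, h3'⟩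
            have : t q p' := sup_left' (b.trans' h3 h1')
            exact t.trans' h2 (t.trans' this h2')
      · rcases h with h | ⟨p, q, h1, h2, h3⟩
        · rcases h' with ⟨p', h1', h2'⟩
          exact ⟨p', b.trans' h h1', h2'⟩
        · rcases h' with ⟨p', h1', h2'⟩
          refine ⟨p, h1, ?_⟩
          have : t q p' := sup_left' (b.trans' h3 h1')
          exact t.trans' h2 (t.trans' this h2')
      · rcases h with ⟨p, h1, h2⟩
        rcases h' with ⟨q, h1', h2'⟩
        exact Or.inr ⟨p, q, h1, t.trans' h2 h1', h2'⟩
      · rcases h with ⟨p, h1, h2⟩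
        exact ⟨p, h1, t.trans' h2 h'⟩
      · rcases h with ⟨q, h1, h2⟩
        rcases h' with h' | ⟨p', q', h1', h2', h3'⟩
        · exact ⟨q, h1, b.trans' h2 h'⟩
        · have : t q p' := sup_left' (b.trans' h2 h1')
          exact ⟨q', t.trans' h1 (t.trans' this h2'), h3'⟩
      · rcases h with ⟨q, h1, h2⟩
        rcases h' with ⟨p', h1', h2'⟩
        have : t q p' := sup_left' (b.trans' h2 h1')
        exact t.trans' h1 (t.trans' this h2')
      · rcases h' with ⟨q', h1', h2'⟩
        exact ⟨q', t.trans' h h1', h2'⟩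
      · exact t.trans' h h'

end UpSup
end PP
namespace PP
variable {n : ℕ}

section UpSup
variable (b : Setoid (DVert n)) (s : Setoid (Fin n))

theorem tsup_to_sup {v w : Fin n} (h : (TpS b ⊔ s) v w) :
    (b ⊔ upS s) (Sum.inr v) (Sum.inr w) := by
  have : TpS b ⊔ s ≤ ⟨fun p q => (b ⊔ upS s) (Sum.inr p) (Sum.inr q),
      ⟨fun _ => (b ⊔ upS s).refl' _, (b ⊔ upS s).symm', (b ⊔ upS s).trans'⟩⟩ := by
    refine sup_le ?_ ?_
    · intro p q h; exact sup_left' h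
    · intro p q h; exact sup_right' (Or.inr ⟨p, q, h, rfl, rfl⟩)
  exact this h

theorem sup_eq_theta : b ⊔ upS s = theta b s := by
  refine le_antisymm (sup_le ?_ ?_) ?_
  · rintro (a | v) (c | w) h
    · exact Or.inl h
    · exact ⟨w, h, (TpS b ⊔ s).refl' _⟩
    · exact ⟨v, (TpS b ⊔ s).refl' _, h⟩
    · exact sup_left' h
  · rintro x y (rfl | ⟨p, q, h, rfl, rfl⟩)
    · exact (theta b s).refl' _
    · exact sup_right' h
  · rintro (a | v) (c | w) h
    · rcases h with h | ⟨p, q, h1, h2, h3⟩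
      · exact sup_left' h
      · exact (b ⊔ upS s).trans' (sup_left' h1)
          ((b ⊔ upS s).trans' (tsup_to_sup b s h2) (sup_left' h3))
    · rcases h with ⟨p, h1, h2⟩
      exact (b ⊔ upS s).trans' (sup_left' h1) (tsup_to_sup b s h2)
    · rcases h with ⟨q, h1, h2⟩
      exact (b ⊔ upS s).trans' (tsup_to_sup b s h1) (sup_left' h2)
    · exact tsup_to_sup b s h

theorem upsup_rr {v w : Fin n} : (b ⊔ upS s) (Sum.inr v) (Sum.inr w) ↔ (TpS b ⊔ s) v w := by
  rw [sup_eq_theta]; exact Iff.rfl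

theorem upsup_lr {a w : Fin n} : (b ⊔ upS s) (Sum.inl a) (Sum.inr w) ↔
    ∃ p, b (Sum.inl a) (Sum.inr p) ∧ (TpS b ⊔ s) p w := by
  rw [sup_eq_theta]; exact Iff.rfl

theorem upsup_ll {a c : Fin n} : (b ⊔ upS s) (Sum.inl a) (Sum.inl c) ↔
    b (Sum.inl a) (Sum.inl c) ∨
      ∃ p q, b (Sum.inl a) (Sum.inr p) ∧ (TpS b ⊔ s) p q ∧ b (Sum.inr q) (Sum.inl c) := by
  rw [sup_eq_theta]; exact Iff.rfl

end UpSup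

/-! ### pstar transport -/

@[simp] theorem pstar_iff (σ : Setoid (DVert n)) (x y : DVert n) :
    pstar n σ x y ↔ σ x.swap y.swap := Iff.rfl

theorem pstar_mono {σ σ' : Setoid (DVert n)} (h : σ ≤ σ') : pstar n σ ≤ pstar n σ' :=
  fun _ _ hxy => h hxy

@[simp] theorem pstar_pstar (σ : Setoid (DVert n)) : pstar n (pstar n σ) = σ := by
  refine Setoid.ext fun x y => ?_
  simp [pstar]

theorem pstar_sup (σ σ' : Setoid (DVert n)) :
    pstar n (σ ⊔ σ') = pstar n σ ⊔ pstar n σ' := by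
  refine le_antisymm ?_ (sup_le (pstar_mono le_sup_left) (pstar_mono le_sup_right))
  have h : σ ⊔ σ' ≤ pstar n (pstar n σ ⊔ pstar n σ') := by
    refine sup_le ?_ ?_
    · have := pstar_mono (n := n) (le_sup_left (a := pstar n σ) (b := pstar n σ'))
      rwa [pstar_pstar] at this
    · have := pstar_mono (n := n) (le_sup_right (a := pstar n σ) (b := pstar n σ'))
      rwa [pstar_pstar] at this
  have := pstar_mono (n := n) h
  rwa [pstar_pstar] at this

theorem pstar_upS (s : Setoid (Fin n)) : pstar n (upS s) = downS s := by
  refine Setoid.ext fun x y => ?_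
  constructor
  · rintro (h | ⟨p, q, hpq, he1, he2⟩)
    · exact Or.inl (by simpa using congrArg Sum.swap h)
    · refine Or.inr ⟨p, q, hpq, ?_, ?_⟩
      · simpa using congrArg Sum.swap he1
      · simpa using congrArg Sum.swap he2
  · rintro (rfl | ⟨p, q, hpq, rfl, rfl⟩)
    · exact Or.inl rfl
    · exact Or.inr ⟨p, q, hpq, rfl, rfl⟩

theorem pstar_downS (s : Setoid (Fin n)) : pstar n (downS s) = upS s := by
  have := congrArg (pstar n) (pstar_upS (n := n) s)
  rw [pstar_pstar] at this
  exact this.symm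

@[simp] theorem BtS_pstar (σ : Setoid (DVert n)) : BtS (pstar n σ) = TpS σ := by
  refine Setoid.ext fun p q => Iff.rfl

@[simp] theorem TpS_pstar (σ : Setoid (DVert n)) : TpS (pstar n σ) = BtS σ := by
  refine Setoid.ext fun p q => Iff.rfl

section DownSup
variable (b : Setoid (DVert n)) (s : Setoid (Fin n))

theorem downsup_iff (x y : DVert n) :
    (b ⊔ downS s) x y ↔ (pstar n b ⊔ upS s) x.swap y.swap := by
  have : b ⊔ downS s = pstar n (pstar n b ⊔ upS s) := by
    rw [pstar_sup, pstar_pstar, pstar_upS]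
  rw [this]; exact Iff.rfl

theorem downsup_ll {v w : Fin n} : (b ⊔ downS s) (Sum.inl v) (Sum.inl w) ↔
    (BtS b ⊔ s) v w := by
  rw [downsup_iff]
  refine (upsup_rr (pstar n b) s).trans ?_
  rw [TpS_pstar]

theorem downsup_rl {a w : Fin n} : (b ⊔ downS s) (Sum.inr a) (Sum.inl w) ↔
    ∃ p, b (Sum.inr a) (Sum.inl p) ∧ (BtS b ⊔ s) p w := by
  rw [downsup_iff]
  refine (upsup_lr (pstar n b) s).trans ?_
  rw [TpS_pstar]
  exact Iff.rfl

theorem downsup_rr {a c : Fin n} : (b ⊔ downS s) (Sum.inr a) (Sum.inr c) ↔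
    b (Sum.inr a) (Sum.inr c) ∨
      ∃ p q, b (Sum.inr a) (Sum.inl p) ∧ (BtS b ⊔ s) p q ∧ b (Sum.inl q) (Sum.inr c) := by
  rw [downsup_iff]
  refine (upsup_ll (pstar n b) s).trans ?_
  rw [TpS_pstar]
  exact Iff.rfl

theorem dsup_to_sup {v w : Fin n} (h : (BtS b ⊔ s) v w) :
    (b ⊔ downS s) (Sum.inl v) (Sum.inl w) := (downsup_ll b s).2 h

end DownSup
end PP
namespace PP
variable {n : ℕ}

@[simp] theorem embBot_inl (i : Fin n) : embBot n (Sum.inl i) = Sum.inl i := rfl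
@[simp] theorem embBot_inr (i : Fin n) : embBot n (Sum.inr i) = Sum.inr (Sum.inl i) := rfl
@[simp] theorem embTop_inl (i : Fin n) : embTop n (Sum.inl i) = Sum.inr (Sum.inl i) := rfl
@[simp] theorem embTop_inr (i : Fin n) : embTop n (Sum.inr i) = Sum.inr (Sum.inr i) := rfl
@[simp] theorem embOut_inl (i : Fin n) : embOut n (Sum.inl i) = Sum.inl i := rfl
@[simp] theorem embOut_inr (i : Fin n) : embOut n (Sum.inr i) = Sum.inr (Sum.inr i) := rfl

section Glue
variable (α β : Setoid (DVert n))

/-- the joint structure seen from the bottom row of a composition `pcomp n α β` -/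
def NN : Setoid (DVert n) := β ⊔ upS (BtS α)

theorem NN_of_bot {x y : DVert n} (h : β x y) : NN α β x y := sup_left' h
theorem NN_of_Bt {p q : Fin n} (h : α (Sum.inl p) (Sum.inl q)) :
    NN α β (Sum.inr p) (Sum.inr q) := sup_right' (Or.inr ⟨p, q, h, rfl, rfl⟩)

/-- generator of the glue relation -/
def ggen : TVert n → TVert n → Prop := fun x y =>
  (∃ a b, β.r a b ∧ x = embBot n a ∧ y = embBot n b) ∨
  (∃ a b, α.r a b ∧ x = embTop n a ∧ y = embTop n b)

theorem glue_eq : glue n α β = EqvGen.setoid (ggen α β) := rfl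

theorem glue_of_gen {x y : TVert n} (h : ggen α β x y) : glue n α β x y :=
  EqvGen.rel _ _ h

theorem NN_to_glue {x y : DVert n} (h : NN α β x y) :
    glue n α β (embBot n x) (embBot n y) := by
  have hle : NN α β ≤ ⟨fun x y => glue n α β (embBot n x) (embBot n y),
      ⟨fun _ => (glue n α β).refl' _, (glue n α β).symm', (glue n α β).trans'⟩⟩ := by
    refine sup_le ?_ ?_
    · intro x y h; exact glue_of_gen α β (Or.inl ⟨x, y, h, rfl, rfl⟩)
    · rintro x y (rfl | ⟨p, q, h, rfl, rfl⟩)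
      · exact (glue n α β).refl' _
      · exact glue_of_gen α β (Or.inr ⟨Sum.inl p, Sum.inl q, h, rfl, rfl⟩)
  exact hle h

/-- class of a bottom vertex in the glued diagram -/
def Za (a : Fin n) : Set (TVert n) := fun x =>
  match x with
  | Sum.inl c => NN α β (Sum.inl c) (Sum.inl a)
  | Sum.inr (Sum.inl p) => NN α β (Sum.inr p) (Sum.inl a)
  | Sum.inr (Sum.inr t) => ∃ p, NN α β (Sum.inr p) (Sum.inl a) ∧ α (Sum.inl p) (Sum.inr t)

theorem glue_bot_iff (a : Fin n) (w : TVert n) :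
    glue n α β (Sum.inl a) w ↔ w ∈ Za α β a := by
  refine eqvgen_class_eq (ggen α β) (Za α β a) ?_ ?_ ?_ w
  · rintro x y (⟨u, v, h, rfl, rfl⟩ | ⟨u, v, h, rfl, rfl⟩)
    · rcases u with u | u <;> rcases v with v | v <;>
        simp only [embBot_inl, embBot_inr, Za, Set.mem_def]
      · exact ⟨fun h2 => (NN α β).trans' ((NN α β).symm' (NN_of_bot α β h)) h2,
          fun h2 => (NN α β).trans' (NN_of_bot α β h) h2⟩
      · exact ⟨fun h2 => (NN α β).trans' ((NN α β).symm' (NN_of_bot α β h)) h2,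
          fun h2 => (NN α β).trans' (NN_of_bot α β h) h2⟩
      · exact ⟨fun h2 => (NN α β).trans' ((NN α β).symm' (NN_of_bot α β h)) h2,
          fun h2 => (NN α β).trans' (NN_of_bot α β h) h2⟩
      · exact ⟨fun h2 => (NN α β).trans' ((NN α β).symm' (NN_of_bot α β h)) h2,
          fun h2 => (NN α β).trans' (NN_of_bot α β h) h2⟩
    · rcases u with u | u <;> rcases v with v | v <;>
        simp only [embTop_inl, embTop_inr, Za, Set.mem_def]
      · exact ⟨fun h2 => (NN α β).trans' ((NN α β).symm' (NN_of_Bt α β h)) h2,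
          fun h2 => (NN α β).trans' (NN_of_Bt α β h) h2⟩
      · constructor
        · intro h2; exact ⟨u, h2, h⟩
        · rintro ⟨p, h1, h2⟩
          exact (NN α β).trans' (NN_of_Bt α β (α.trans' h (α.symm' h2))) h1
      · constructor
        · rintro ⟨p, h1, h2⟩
          exact (NN α β).trans' (NN_of_Bt α β (α.trans' ((α.symm' h)) (α.symm' h2))) h1
        · intro h2; exact ⟨v, h2, α.symm' h⟩
      · constructor
        · rintro ⟨p, h1, h2⟩; exact ⟨p, h1, α.trans' h2 h⟩
        · rintro ⟨p, h1, h2⟩; exact ⟨p, h1, α.trans' h2 (α.symm' h)⟩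
  · show NN α β _ _
    exact (NN α β).refl' _
  · rintro (c | p | t) hz
    · exact (glue n α β).symm' (NN_to_glue α β (hz : NN α β (Sum.inl c) (Sum.inl a)))
    · exact (glue n α β).symm' (NN_to_glue α β (hz : NN α β (Sum.inr p) (Sum.inl a)))
    · obtain ⟨p, h1, h2⟩ := hz
      refine (glue n α β).trans' ((glue n α β).symm' (NN_to_glue α β h1)) ?_
      exact glue_of_gen α β (Or.inr ⟨Sum.inl p, Sum.inr t, h2, rfl, rfl⟩)

theorem pcomp_bb {a c : Fin n} :
    pcomp n α β (Sum.inl a) (Sum.inl c) ↔ NN α β (Sum.inl a) (Sum.inl c) := by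
  have := glue_bot_iff α β a (Sum.inl c)
  exact ⟨fun h => (NN α β).symm' (this.1 h), fun h => this.2 ((NN α β).symm' h)⟩

theorem pcomp_bt {a t : Fin n} :
    pcomp n α β (Sum.inl a) (Sum.inr t) ↔
      ∃ p, NN α β (Sum.inr p) (Sum.inl a) ∧ α (Sum.inl p) (Sum.inr t) := by
  exact glue_bot_iff α β a (Sum.inr (Sum.inr t))

/-- class of a top vertex in the glued diagram -/
def Zs (s : Fin n) : Set (TVert n) := fun x =>
  match x with
  | Sum.inl c => ∃ p, α (Sum.inl p) (Sum.inr s) ∧ NN α β (Sum.inr p) (Sum.inl c)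
  | Sum.inr (Sum.inl q) => ∃ p, α (Sum.inl p) (Sum.inr s) ∧ NN α β (Sum.inr p) (Sum.inr q)
  | Sum.inr (Sum.inr t) => α (Sum.inr s) (Sum.inr t) ∨
      ∃ p q, α (Sum.inl p) (Sum.inr s) ∧ NN α β (Sum.inr p) (Sum.inr q) ∧
        α (Sum.inl q) (Sum.inr t)

theorem glue_top_iff (s : Fin n) (w : TVert n) :
    glue n α β (Sum.inr (Sum.inr s)) w ↔ w ∈ Zs α β s := by
  refine eqvgen_class_eq (ggen α β) (Zs α β s) ?_ ?_ ?_ w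
  · rintro x y (⟨u, v, h, rfl, rfl⟩ | ⟨u, v, h, rfl, rfl⟩)
    · rcases u with u | u <;> rcases v with v | v <;>
        simp only [embBot_inl, embBot_inr, Zs, Set.mem_def]
      · constructor
        · rintro ⟨p, h1, h2⟩; exact ⟨p, h1, (NN α β).trans' h2 (NN_of_bot α β h)⟩
        · rintro ⟨p, h1, h2⟩
          exact ⟨p, h1, (NN α β).trans' h2 ((NN α β).symm' (NN_of_bot α β h))⟩
      · constructor
        · rintro ⟨p, h1, h2⟩; exact ⟨p, h1, (NN α β).trans' h2 (NN_of_bot α β h)⟩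
        · rintro ⟨p, h1, h2⟩
          exact ⟨p, h1, (NN α β).trans' h2 ((NN α β).symm' (NN_of_bot α β h))⟩
      · constructor
        · rintro ⟨p, h1, h2⟩; exact ⟨p, h1, (NN α β).trans' h2 (NN_of_bot α β h)⟩
        · rintro ⟨p, h1, h2⟩
          exact ⟨p, h1, (NN α β).trans' h2 ((NN α β).symm' (NN_of_bot α β h))⟩
      · constructor
        · rintro ⟨p, h1, h2⟩; exact ⟨p, h1, (NN α β).trans' h2 (NN_of_bot α β h)⟩
        · rintro ⟨p, h1, h2⟩
          exact ⟨p, h1, (NN α β).trans' h2 ((NN α β).symm' (NN_of_bot α β h))⟩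
    · rcases u with u | u <;> rcases v with v | v <;>
        simp only [embTop_inl, embTop_inr, Zs, Set.mem_def]
      · constructor
        · rintro ⟨p, h1, h2⟩; exact ⟨p, h1, (NN α β).trans' h2 (NN_of_Bt α β h)⟩
        · rintro ⟨p, h1, h2⟩
          exact ⟨p, h1, (NN α β).trans' h2 ((NN α β).symm' (NN_of_Bt α β h))⟩
      · constructor
        · rintro ⟨p, h1, h2⟩; exact Or.inr ⟨p, u, h1, h2, h⟩
        · rintro (h2 | ⟨p, q, h1, h2, h3⟩)
          · exact ⟨u, α.trans' h ((α.symm' h2)), (NN α β).refl' _⟩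
          · exact ⟨p, h1, (NN α β).trans' h2 (NN_of_Bt α β (α.trans' h3 (α.symm' h)))⟩
      · constructor
        · rintro (h2 | ⟨p, q, h1, h2, h3⟩)
          · exact ⟨v, α.trans' (α.symm' h) (α.symm' h2), (NN α β).refl' _⟩
          · exact ⟨p, h1, (NN α β).trans' h2 (NN_of_Bt α β (α.trans' h3 (α.symm' (α.symm' h))))⟩
        · rintro ⟨p, h1, h2⟩; exact Or.inr ⟨p, v, h1, h2, α.symm' h⟩
      · constructor
        · rintro (h2 | ⟨p, q, h1, h2, h3⟩)
          · exact Or.inl (α.trans' h2 h)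
          · exact Or.inr ⟨p, q, h1, h2, α.trans' h3 h⟩
        · rintro (h2 | ⟨p, q, h1, h2, h3⟩)
          · exact Or.inl (α.trans' h2 (α.symm' h))
          · exact Or.inr ⟨p, q, h1, h2, α.trans' h3 (α.symm' h)⟩
  · show α (Sum.inr s) (Sum.inr s) ∨ _
    exact Or.inl (α.refl' _)
  · rintro (c | q | t) hz
    · obtain ⟨p, h1, h2⟩ := hz
      refine (glue n α β).trans' ?_ (NN_to_glue α β h2)
      exact (glue n α β).symm' (glue_of_gen α β (Or.inr ⟨Sum.inl p, Sum.inr s, h1, rfl, rfl⟩))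
    · obtain ⟨p, h1, h2⟩ := hz
      refine (glue n α β).trans' ?_ (NN_to_glue α β h2)
      exact (glue n α β).symm' (glue_of_gen α β (Or.inr ⟨Sum.inl p, Sum.inr s, h1, rfl, rfl⟩))
    · rcases hz with h2 | ⟨p, q, h1, h2, h3⟩
      · exact glue_of_gen α β (Or.inr ⟨Sum.inr s, Sum.inr t, h2, rfl, rfl⟩)
      · refine (glue n α β).trans' ((glue n α β).symm'
          (glue_of_gen α β (Or.inr ⟨Sum.inl p, Sum.inr s, h1, rfl, rfl⟩))) ?_
        refine (glue n α β).trans' (NN_to_glue α β h2) ?_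
        exact glue_of_gen α β (Or.inr ⟨Sum.inl q, Sum.inr t, h3, rfl, rfl⟩)

theorem pcomp_tt {s t : Fin n} :
    pcomp n α β (Sum.inr s) (Sum.inr t) ↔
      α (Sum.inr s) (Sum.inr t) ∨
        ∃ p q, α (Sum.inl p) (Sum.inr s) ∧ NN α β (Sum.inr p) (Sum.inr q) ∧
          α (Sum.inl q) (Sum.inr t) := by
  exact glue_top_iff α β s (Sum.inr (Sum.inr t))

theorem pcomp_of_bot {a c : Fin n} (h : β (Sum.inl a) (Sum.inl c)) :
    pcomp n α β (Sum.inl a) (Sum.inl c) :=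
  (pcomp_bb α β).2 (NN_of_bot α β h)

theorem pcomp_of_top {s t : Fin n} (h : α (Sum.inr s) (Sum.inr t)) :
    pcomp n α β (Sum.inr s) (Sum.inr t) :=
  (pcomp_tt α β).2 (Or.inl h)

theorem pcomp_bt_exists {a t : Fin n} (h : pcomp n α β (Sum.inl a) (Sum.inr t)) :
    ∃ p, β (Sum.inl a) (Sum.inr p) := by
  obtain ⟨p, h1, _⟩ := (pcomp_bt α β).1 h
  have h2 : (β ⊔ upS (BtS α)) (Sum.inl a) (Sum.inr p) := (NN α β).symm' h1
  obtain ⟨p₀, h3, _⟩ := (upsup_lr β (BtS α)).1 h2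
  exact ⟨p₀, h3⟩

end Glue
end PP
namespace PP
variable {n : ℕ}

/-! ### propagating elements, leaders -/

def isP (σ : Setoid (DVert n)) (x : DVert n) : Prop :=
  (∃ i, σ x (Sum.inl i)) ∧ (∃ j, σ x (Sum.inr j))

theorem isP_congr (σ : Setoid (DVert n)) {x y : DVert n} (h : σ x y) :
    isP σ x ↔ isP σ y := by
  unfold isP
  constructor
  · rintro ⟨⟨i, hi⟩, ⟨j, hj⟩⟩
    exact ⟨⟨i, σ.trans' (σ.symm' h) hi⟩, ⟨j, σ.trans' (σ.symm' h) hj⟩⟩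
  · rintro ⟨⟨i, hi⟩, ⟨j, hj⟩⟩
    exact ⟨⟨i, σ.trans' h hi⟩, ⟨j, σ.trans' h hj⟩⟩

def cls (σ : Setoid (DVert n)) (x : DVert n) : Set (DVert n) := {y | σ y x}

theorem cls_mem_classes (σ : Setoid (DVert n)) (x : DVert n) : cls σ x ∈ σ.classes :=
  ⟨x, rfl⟩

theorem mem_cls_iff {σ : Setoid (DVert n)} {x y : DVert n} : y ∈ cls σ x ↔ σ y x := Iff.rfl

theorem cls_eq_of_rel {σ : Setoid (DVert n)} {x y : DVert n} (h : σ x y) :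
    cls σ x = cls σ y :=
  Set.ext fun z => ⟨fun hz => σ.trans' hz h, fun hz => σ.trans' hz (σ.symm' h)⟩

theorem rel_of_cls_eq {σ : Setoid (DVert n)} {x y : DVert n} (h : cls σ x = cls σ y) :
    σ x y := by
  have : x ∈ cls σ y := h ▸ (σ.refl' x : x ∈ cls σ x)
  exact this

theorem isPropagating_cls_iff {σ : Setoid (DVert n)} {x : DVert n} :
    IsPropagating (cls σ x) ↔ isP σ x := by
  unfold IsPropagating isP cls
  constructor
  · rintro ⟨⟨i, hi⟩, ⟨j, hj⟩⟩; exact ⟨⟨i, σ.symm' hi⟩, ⟨j, σ.symm' hj⟩⟩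
  · rintro ⟨⟨i, hi⟩, ⟨j, hj⟩⟩; exact ⟨⟨i, σ.symm' hi⟩, ⟨j, σ.symm' hj⟩⟩

/-- minimal unprimed element related to `x` -/
def lL (σ : Setoid (DVert n)) (x : DVert n) (h : ∃ j, σ x (Sum.inl j)) : Fin n :=
  (Finset.univ.filter fun j => σ x (Sum.inl j)).min'
    ⟨h.choose, by simp [h.choose_spec]⟩

theorem lL_rel (σ : Setoid (DVert n)) (x : DVert n) (h : ∃ j, σ x (Sum.inl j)) :
    σ x (Sum.inl (lL σ x h)) := by
  have := Finset.min'_mem (Finset.univ.filter fun j => σ x (Sum.inl j))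
    ⟨h.choose, by simp [h.choose_spec]⟩
  exact (Finset.mem_filter.1 this).2

theorem lL_min (σ : Setoid (DVert n)) (x : DVert n) (h : ∃ j, σ x (Sum.inl j))
    {j : Fin n} (hj : σ x (Sum.inl j)) : lL σ x h ≤ j :=
  Finset.min'_le _ _ (by simp [hj])

/-- minimal primed element related to `x` -/
def lR (σ : Setoid (DVert n)) (x : DVert n) (h : ∃ j, σ x (Sum.inr j)) : Fin n :=
  (Finset.univ.filter fun j => σ x (Sum.inr j)).min'
    ⟨h.choose, by simp [h.choose_spec]⟩

theorem lR_rel (σ : Setoid (DVert n)) (x : DVert n) (h : ∃ j, σ x (Sum.inr j)) :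
    σ x (Sum.inr (lR σ x h)) := by
  have := Finset.min'_mem (Finset.univ.filter fun j => σ x (Sum.inr j))
    ⟨h.choose, by simp [h.choose_spec]⟩
  exact (Finset.mem_filter.1 this).2

theorem lR_min (σ : Setoid (DVert n)) (x : DVert n) (h : ∃ j, σ x (Sum.inr j))
    {j : Fin n} (hj : σ x (Sum.inr j)) : lR σ x h ≤ j :=
  Finset.min'_le _ _ (by simp [hj])

def Ldr (σ : Setoid (DVert n)) (i : Fin n) : Prop :=
  isP σ (Sum.inl i) ∧ ∀ j, σ (Sum.inl i) (Sum.inl j) → i ≤ j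

def Rdr (σ : Setoid (DVert n)) (i : Fin n) : Prop :=
  isP σ (Sum.inr i) ∧ ∀ j, σ (Sum.inr i) (Sum.inr j) → i ≤ j

def LL (σ : Setoid (DVert n)) : Finset (Fin n) := Finset.univ.filter fun i => Ldr σ i
def RR (σ : Setoid (DVert n)) : Finset (Fin n) := Finset.univ.filter fun i => Rdr σ i

theorem mem_LL {σ : Setoid (DVert n)} {i : Fin n} : i ∈ LL σ ↔ Ldr σ i := by
  simp [LL]
theorem mem_RR {σ : Setoid (DVert n)} {i : Fin n} : i ∈ RR σ ↔ Rdr σ i := by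
  simp [RR]

theorem Ldr_lL (σ : Setoid (DVert n)) (x : DVert n) (hp : isP σ x)
    (h : ∃ j, σ x (Sum.inl j)) : Ldr σ (lL σ x h) := by
  constructor
  · exact (isP_congr σ (σ.symm' (lL_rel σ x h))).2 hp
  · intro j hj
    exact lL_min σ x h (σ.trans' (lL_rel σ x h) hj)

theorem Rdr_lR (σ : Setoid (DVert n)) (x : DVert n) (hp : isP σ x)
    (h : ∃ j, σ x (Sum.inr j)) : Rdr σ (lR σ x h) := by
  constructor
  · exact (isP_congr σ (σ.symm' (lR_rel σ x h))).2 hp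
  · intro j hj
    exact lR_min σ x h (σ.trans' (lR_rel σ x h) hj)

theorem Ldr_unique {σ : Setoid (DVert n)} {i j : Fin n} (hi : Ldr σ i) (hj : Ldr σ j)
    (h : σ (Sum.inl i) (Sum.inl j)) : i = j :=
  le_antisymm (hi.2 j h) (hj.2 i (σ.symm' h))

theorem Rdr_unique {σ : Setoid (DVert n)} {i j : Fin n} (hi : Rdr σ i) (hj : Rdr σ j)
    (h : σ (Sum.inr i) (Sum.inr j)) : i = j :=
  le_antisymm (hi.2 j h) (hj.2 i (σ.symm' h))

/-! ### rank as cardinality of leaders -/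

theorem propclass_iff {σ : Setoid (DVert n)} {C : Set (DVert n)} :
    (C ∈ σ.classes ∧ IsPropagating C) ↔ ∃ i ∈ LL σ, C = cls σ (Sum.inl i) := by
  constructor
  · rintro ⟨⟨y, rfl⟩, hp⟩
    have hy : isP σ y := by
      obtain ⟨⟨i, hi⟩, ⟨j, hj⟩⟩ := hp
      exact ⟨⟨i, σ.symm' hi⟩, ⟨j, σ.symm' hj⟩⟩
    refine ⟨lL σ y hy.1, mem_LL.2 (Ldr_lL σ y hy hy.1), ?_⟩
    exact cls_eq_of_rel (lL_rel σ y hy.1)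
  · rintro ⟨i, hi, rfl⟩
    refine ⟨cls_mem_classes σ _, ?_⟩
    exact isPropagating_cls_iff.2 (mem_LL.1 hi).1

theorem cls_inl_injOn {σ : Setoid (DVert n)} :
    ∀ i ∈ LL σ, ∀ j ∈ LL σ, cls σ (Sum.inl i) = cls σ (Sum.inl j) → i = j := by
  intro i hi j hj h
  exact Ldr_unique (mem_LL.1 hi) (mem_LL.1 hj) (rel_of_cls_eq h)

theorem cls_inr_injOn {σ : Setoid (DVert n)} :
    ∀ i ∈ RR σ, ∀ j ∈ RR σ, cls σ (Sum.inr i) = cls σ (Sum.inr j) → i = j := by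
  intro i hi j hj h
  exact Rdr_unique (mem_RR.1 hi) (mem_RR.1 hj) (rel_of_cls_eq h)

theorem propclass_set_eq (σ : Setoid (DVert n)) :
    {C ∈ σ.classes | IsPropagating C} =
      (fun i => cls σ (Sum.inl i)) '' (LL σ : Set (Fin n)) := by
  ext C
  constructor
  · rintro ⟨h1, h2⟩
    obtain ⟨i, hi, rfl⟩ := propclass_iff.1 ⟨h1, h2⟩
    exact ⟨i, by simpa using hi, rfl⟩
  · rintro ⟨i, hi, rfl⟩
    exact propclass_iff.2 ⟨i, by simpa using hi, rfl⟩

theorem prank_eq_card_LL (σ : Setoid (DVert n)) : prank n σ = (LL σ).card := by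
  unfold prank
  rw [propclass_set_eq σ]
  rw [Set.ncard_image_of_injOn (by
    intro i hi j hj h
    exact cls_inl_injOn i (by simpa using hi) j (by simpa using hj) h)]
  exact Set.ncard_coe_finset _

theorem propclass_set_eq_R (σ : Setoid (DVert n)) :
    {C ∈ σ.classes | IsPropagating C} =
      (fun i => cls σ (Sum.inr i)) '' (RR σ : Set (Fin n)) := by
  ext C
  constructor
  · rintro ⟨⟨y, rfl⟩, hp⟩
    have hy : isP σ y := by
      obtain ⟨⟨i, hi⟩, ⟨j, hj⟩⟩ := hp
      exact ⟨⟨i, σ.symm' hi⟩, ⟨j, σ.symm' hj⟩⟩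
    refine ⟨lR σ y hy.2, by simpa using mem_RR.2 (Rdr_lR σ y hy hy.2), ?_⟩
    exact (cls_eq_of_rel (lR_rel σ y hy.2)).symm
  · rintro ⟨i, hi, rfl⟩
    have hi' : Rdr σ i := mem_RR.1 (by simpa using hi)
    exact ⟨cls_mem_classes σ _, isPropagating_cls_iff.2 hi'.1⟩

theorem prank_eq_card_RR (σ : Setoid (DVert n)) : prank n σ = (RR σ).card := by
  unfold prank
  rw [propclass_set_eq_R σ]
  rw [Set.ncard_image_of_injOn (by
    intro i hi j hj h
    exact cls_inr_injOn i (by simpa using hi) j (by simpa using hj) h)]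
  exact Set.ncard_coe_finset _

end PP
namespace PP
variable {n : ℕ}

/-! ### minima and positions of propagating classes -/

theorem minL_cls (σ : Setoid (DVert n)) {i : Fin n} (hi : Ldr σ i) :
    minL (cls σ (Sum.inl i)) = (i : ℕ) := by
  unfold minL
  refine le_antisymm (Nat.sInf_le ⟨i, rfl, σ.refl' _⟩) (le_csInf ⟨i, i, rfl, σ.refl' _⟩ ?_)
  rintro m ⟨j, rfl, hj⟩
  exact_mod_cast hi.2 j (σ.symm' hj)

theorem minR_cls (σ : Setoid (DVert n)) {i : Fin n} (hi : Rdr σ i) :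
    minR (cls σ (Sum.inr i)) = (i : ℕ) := by
  unfold minR
  refine le_antisymm (Nat.sInf_le ⟨i, rfl, σ.refl' _⟩) (le_csInf ⟨i, i, rfl, σ.refl' _⟩ ?_)
  rintro m ⟨j, rfl, hj⟩
  exact_mod_cast hi.2 j (σ.symm' hj)

/-- rank of an element inside a finset -/
def rkf (s : Finset (Fin n)) (a : Fin n) : ℕ := (s.filter (· < a)).card

theorem rkf_lt {s : Finset (Fin n)} {a : Fin n} (ha : a ∈ s) : rkf s a < s.card := by
  refine Finset.card_lt_card ⟨Finset.filter_subset _ _, fun hsub => ?_⟩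
  have := hsub ha
  simp at this

theorem rkf_strictMono {s : Finset (Fin n)} {a b : Fin n} (ha : a ∈ s) (hab : a < b) :
    rkf s a < rkf s b := by
  refine Finset.card_lt_card ⟨?_, fun hsub => ?_⟩
  · intro x hx
    simp only [Finset.mem_filter] at hx ⊢
    exact ⟨hx.1, lt_trans hx.2 hab⟩
  · have h1 : a ∈ s.filter (· < b) := by simp [ha, hab]
    have := hsub h1
    simp at this

theorem posL_cls (σ : Setoid (DVert n)) {i : Fin n} (hi : i ∈ LL σ) :
    posL n σ (cls σ (Sum.inl i)) = rkf (LL σ) i := by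
  unfold posL
  have heq : {D ∈ σ.classes | IsPropagating D ∧ minL D < minL (cls σ (Sum.inl i))} =
      (fun j => cls σ (Sum.inl j)) '' ((LL σ).filter (· < i) : Set (Fin n)) := by
    ext D
    constructor
    · rintro ⟨h1, h2, h3⟩
      obtain ⟨j, hj, rfl⟩ := propclass_iff.1 ⟨h1, h2⟩
      refine ⟨j, ?_, rfl⟩
      rw [minL_cls σ (mem_LL.1 hj), minL_cls σ (mem_LL.1 hi)] at h3
      simp only [Finset.coe_filter, Set.mem_setOf_eq]
      exact ⟨hj, by exact_mod_cast h3⟩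
    · rintro ⟨j, hj, rfl⟩
      simp only [Finset.coe_filter, Set.mem_setOf_eq] at hj
      obtain ⟨hj1, hj2⟩ := hj
      have := propclass_iff.2 ⟨j, hj1, rfl⟩
      refine ⟨this.1, this.2, ?_⟩
      rw [minL_cls σ (mem_LL.1 hj1), minL_cls σ (mem_LL.1 hi)]
      exact_mod_cast hj2
  rw [heq, Set.ncard_image_of_injOn (by
    intro a ha b hb h
    simp only [Finset.coe_filter, Set.mem_setOf_eq] at ha hb
    exact Ldr_unique (mem_LL.1 ha.1) (mem_LL.1 hb.1) (rel_of_cls_eq h))]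
  rw [Set.ncard_coe_finset]
  rfl

theorem posR_cls (σ : Setoid (DVert n)) {i : Fin n} (hi : i ∈ RR σ) :
    posR n σ (cls σ (Sum.inr i)) = rkf (RR σ) i := by
  unfold posR
  have heq : {D ∈ σ.classes | IsPropagating D ∧ minR D < minR (cls σ (Sum.inr i))} =
      (fun j => cls σ (Sum.inr j)) '' ((RR σ).filter (· < i) : Set (Fin n)) := by
    ext D
    constructor
    · rintro ⟨h1, h2, h3⟩
      have := propclass_set_eq_R σ
      have hD : D ∈ (fun i => cls σ (Sum.inr i)) '' (RR σ : Set (Fin n)) := by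
        rw [← this]; exact ⟨h1, h2⟩
      obtain ⟨j, hj, rfl⟩ := hD
      have hj' : j ∈ RR σ := by simpa using hj
      refine ⟨j, ?_, rfl⟩
      rw [minR_cls σ (mem_RR.1 hj'), minR_cls σ (mem_RR.1 hi)] at h3
      simp only [Finset.coe_filter, Set.mem_setOf_eq]
      exact ⟨hj', by exact_mod_cast h3⟩
    · rintro ⟨j, hj, rfl⟩
      simp only [Finset.coe_filter, Set.mem_setOf_eq] at hj
      obtain ⟨hj1, hj2⟩ := hj
      have hmem : cls σ (Sum.inr j) ∈ {C ∈ σ.classes | IsPropagating C} := by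
        rw [propclass_set_eq_R σ]
        exact ⟨j, by simpa using hj1, rfl⟩
      refine ⟨hmem.1, hmem.2, ?_⟩
      rw [minR_cls σ (mem_RR.1 hj1), minR_cls σ (mem_RR.1 hi)]
      exact_mod_cast hj2
  rw [heq, Set.ncard_image_of_injOn (by
    intro a ha b hb h
    simp only [Finset.coe_filter, Set.mem_setOf_eq] at ha hb
    exact Rdr_unique (mem_RR.1 ha.1) (mem_RR.1 hb.1) (rel_of_cls_eq h))]
  rw [Set.ncard_coe_finset]
  rfl

end PP
namespace PP
variable {n : ℕ}

theorem rkf_inj {s : Finset (Fin n)} {a b : Fin n} (ha : a ∈ s) (hb : b ∈ s)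
    (h : rkf s a = rkf s b) : a = b := by
  rcases lt_trichotomy a b with hab | hab | hab
  · exact absurd h (Nat.ne_of_lt (rkf_strictMono ha hab))
  · exact hab
  · exact absurd h.symm (Nat.ne_of_lt (rkf_strictMono hb hab))

section PermChar
variable (σ : Setoid (DVert n)) {k : ℕ}

def rkL (hk : prank n σ = k) : {i // i ∈ LL σ} → Fin k := fun i =>
  ⟨rkf (LL σ) i, by
    have := rkf_lt i.2
    rwa [← prank_eq_card_LL, hk] at this⟩

def rkR (hk : prank n σ = k) : {i // i ∈ RR σ} → Fin k := fun i =>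
  ⟨rkf (RR σ) i, by
    have := rkf_lt i.2
    rwa [← prank_eq_card_RR, hk] at this⟩

theorem rkL_bij (hk : prank n σ = k) : Function.Bijective (rkL σ hk) := by
  rw [Fintype.bijective_iff_injective_and_card]
  constructor
  · intro a b h
    exact Subtype.ext (rkf_inj a.2 b.2 (congrArg Fin.val h))
  · rw [Fintype.card_coe, Fintype.card_fin, ← prank_eq_card_LL, hk]

theorem rkR_bij (hk : prank n σ = k) : Function.Bijective (rkR σ hk) := by
  rw [Fintype.bijective_iff_injective_and_card]
  constructor
  · intro a b h
    exact Subtype.ext (rkf_inj a.2 b.2 (congrArg Fin.val h))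
  · rw [Fintype.card_coe, Fintype.card_fin, ← prank_eq_card_RR, hk]

/-- matched primed leader of an unprimed leader -/
def muL : {i // i ∈ LL σ} → {j // j ∈ RR σ} := fun i =>
  ⟨lR σ (Sum.inl i.1) (mem_LL.1 i.2).1.2,
    mem_RR.2 (Rdr_lR σ (Sum.inl i.1) (mem_LL.1 i.2).1 (mem_LL.1 i.2).1.2)⟩

theorem muL_bij : Function.Bijective (muL σ) := by
  rw [Fintype.bijective_iff_injective_and_card]
  constructor
  · intro a b h
    have ha := lR_rel σ (Sum.inl a.1) (mem_LL.1 a.2).1.2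
    have hb := lR_rel σ (Sum.inl b.1) (mem_LL.1 b.2).1.2
    have hj : (muL σ a).1 = (muL σ b).1 := congrArg Subtype.val h
    rw [show (muL σ a).1 = lR σ (Sum.inl a.1) (mem_LL.1 a.2).1.2 from rfl,
      show (muL σ b).1 = lR σ (Sum.inl b.1) (mem_LL.1 b.2).1.2 from rfl] at hj
    have : σ (Sum.inl a.1) (Sum.inl b.1) :=
      σ.trans' ha (by rw [hj]; exact σ.symm' hb)
    exact Subtype.ext (Ldr_unique (mem_LL.1 a.2) (mem_LL.1 b.2) this)
  · rw [Fintype.card_coe, Fintype.card_coe, ← prank_eq_card_LL, ← prank_eq_card_RR]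

/-- the canonical propagation permutation -/
noncomputable def permCanon (hk : prank n σ = k) : Equiv.Perm (Fin k) :=
  (Equiv.ofBijective _ (rkL_bij σ hk)).symm.trans
    ((Equiv.ofBijective _ (muL_bij σ)).trans (Equiv.ofBijective _ (rkR_bij σ hk)))

theorem permCanon_spec (hk : prank n σ = k) :
    ∀ C ∈ σ.classes, IsPropagating C → ∀ h : posL n σ C < k,
      ((permCanon σ hk ⟨posL n σ C, h⟩ : Fin k) : ℕ) = posR n σ C := by
  intro C hC hp h
  obtain ⟨i, hi, rfl⟩ := propclass_iff.1 ⟨hC, hp⟩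
  have hval : posL n σ (cls σ (Sum.inl i)) = rkf (LL σ) i := posL_cls σ hi
  have hfin : (⟨posL n σ (cls σ (Sum.inl i)), h⟩ : Fin k) = rkL σ hk ⟨i, hi⟩ :=
    Fin.ext hval
  rw [hfin]
  have : permCanon σ hk (rkL σ hk ⟨i, hi⟩) = rkR σ hk (muL σ ⟨i, hi⟩) := by
    unfold permCanon
    rw [Equiv.trans_apply]
    have : (Equiv.ofBijective _ (rkL_bij σ hk)).symm (rkL σ hk ⟨i, hi⟩) = ⟨i, hi⟩ := by
      have := Equiv.symm_apply_apply (Equiv.ofBijective _ (rkL_bij σ hk)) ⟨i, hi⟩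
      exact this
    rw [this]
    rfl
  rw [this]
  have hj := (muL σ ⟨i, hi⟩).2
  have hrel : σ (Sum.inl i) (Sum.inr (muL σ ⟨i, hi⟩).1) :=
    lR_rel σ (Sum.inl i) (mem_LL.1 hi).1.2
  have hcls : cls σ (Sum.inl i) = cls σ (Sum.inr (muL σ ⟨i, hi⟩).1) :=
    cls_eq_of_rel hrel
  rw [hcls, posR_cls σ hj]
  rfl

theorem permAt_spec (hk : prank n σ = k) :
    ∀ C ∈ σ.classes, IsPropagating C → ∀ h : posL n σ C < k,
      ((permAt n k σ ⟨posL n σ C, h⟩ : Fin k) : ℕ) = posR n σ C := by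
  have : permAt n k σ = Classical.epsilon (fun π : Equiv.Perm (Fin k) =>
      ∀ C ∈ σ.classes, IsPropagating C → ∀ h : posL n σ C < k,
        ((π ⟨posL n σ C, h⟩ : Fin k) : ℕ) = posR n σ C) := rfl
  rw [this]
  exact Classical.epsilon_spec (p := fun π : Equiv.Perm (Fin k) =>
    ∀ C ∈ σ.classes, IsPropagating C → ∀ h : posL n σ C < k,
      ((π ⟨posL n σ C, h⟩ : Fin k) : ℕ) = posR n σ C)
    ⟨permCanon σ hk, permCanon_spec σ hk⟩

/-- the key interface: value of `permAt` on the rank of an unprimed leader -/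
theorem permAt_char (hk : prank n σ = k) {i : Fin n} (hi : i ∈ LL σ)
    (hlt : rkf (LL σ) i < k) :
    ((permAt n k σ ⟨rkf (LL σ) i, hlt⟩ : Fin k) : ℕ) =
      rkf (RR σ) (lR σ (Sum.inl i) (mem_LL.1 hi).1.2) := by
  have h2 : posL n σ (cls σ (Sum.inl i)) < k := by
    rw [posL_cls σ hi]; exact hlt
  have := permAt_spec σ hk (cls σ (Sum.inl i)) (cls_mem_classes σ _)
    (isPropagating_cls_iff.2 (mem_LL.1 hi).1) h2
  have hfin : (⟨posL n σ (cls σ (Sum.inl i)), h2⟩ : Fin k) = ⟨rkf (LL σ) i, hlt⟩ :=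
    Fin.ext (posL_cls σ hi)
  rw [hfin] at this
  rw [this]
  have hrel : σ (Sum.inl i) (Sum.inr (lR σ (Sum.inl i) (mem_LL.1 hi).1.2)) :=
    lR_rel σ (Sum.inl i) (mem_LL.1 hi).1.2
  have hj : Rdr σ (lR σ (Sum.inl i) (mem_LL.1 hi).1.2) :=
    Rdr_lR σ (Sum.inl i) (mem_LL.1 hi).1 (mem_LL.1 hi).1.2
  rw [cls_eq_of_rel hrel, posR_cls σ (mem_RR.2 hj)]

theorem rkf_surj {s : Finset (Fin n)} {k : ℕ} (hc : s.card = k) (x : Fin k) :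
    ∃ a ∈ s, rkf s a = (x : ℕ) := by
  have hbij : Function.Bijective (fun a : {i // i ∈ s} => (⟨rkf s a, hc ▸ rkf_lt a.2⟩ : Fin k)) := by
    rw [Fintype.bijective_iff_injective_and_card]
    constructor
    · intro a b h
      exact Subtype.ext (rkf_inj a.2 b.2 (congrArg Fin.val h))
    · rw [Fintype.card_coe, Fintype.card_fin, hc]
  obtain ⟨a, ha⟩ := hbij.2 x
  exact ⟨a.1, a.2, congrArg Fin.val ha⟩

end PermChar
end PP
namespace PP
variable {n : ℕ}

theorem upS_mono {s t : Setoid (Fin n)} (h : s ≤ t) : upS s ≤ upS t := by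
  rintro x y (rfl | ⟨p, q, hpq, rfl, rfl⟩)
  · exact Or.inl rfl
  · exact Or.inr ⟨p, q, h hpq, rfl, rfl⟩

theorem downS_mono {s t : Setoid (Fin n)} (h : s ≤ t) : downS s ≤ downS t := by
  rintro x y (rfl | ⟨p, q, hpq, rfl, rfl⟩)
  · exact Or.inl rfl
  · exact Or.inr ⟨p, q, h hpq, rfl, rfl⟩

section RankA
variable (α ι : Setoid (DVert n))

theorem ι_le_pcomp {a b : Fin n} (h : ι (Sum.inl a) (Sum.inl b)) :
    pcomp n α ι (Sum.inl a) (Sum.inl b) := pcomp_of_bot α ι h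

theorem isP_ι_of_LLcomp {i : Fin n} (hi : i ∈ LL (pcomp n α ι)) : isP ι (Sum.inl i) := by
  obtain ⟨t, ht⟩ := (mem_LL.1 hi).1.2
  obtain ⟨p, hp⟩ := pcomp_bt_exists α ι ht
  exact ⟨⟨i, ι.refl' _⟩, ⟨p, hp⟩⟩

/-- the `ι`-leader of an unprimed vertex -/
def lam (i : Fin n) : Fin n := lL ι (Sum.inl i) ⟨i, ι.refl' _⟩

theorem lam_rel (i : Fin n) : ι (Sum.inl i) (Sum.inl (lam ι i)) :=
  lL_rel ι (Sum.inl i) ⟨i, ι.refl' _⟩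

theorem lam_mem {i : Fin n} (hp : isP ι (Sum.inl i)) : lam ι i ∈ LL ι :=
  mem_LL.2 (Ldr_lL ι (Sum.inl i) hp ⟨i, ι.refl' _⟩)

theorem lam_surj (hrk : prank n (pcomp n α ι) = prank n ι) :
    ∀ i₀ ∈ LL ι, ∃ m ∈ LL (pcomp n α ι), i₀ = lam ι m := by
  have hinj : ∀ (a b : Fin n), a ∈ LL (pcomp n α ι) → b ∈ LL (pcomp n α ι) →
      lam ι a = lam ι b → a = b := by
    intro a b ha hb h
    have h1 : ι (Sum.inl a) (Sum.inl (lam ι a)) := lam_rel ι a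
    have h2 : ι (Sum.inl b) (Sum.inl (lam ι a)) := h ▸ lam_rel ι b
    have : pcomp n α ι (Sum.inl a) (Sum.inl b) :=
      (pcomp n α ι).trans' (ι_le_pcomp α ι h1) ((pcomp n α ι).symm' (ι_le_pcomp α ι h2))
    exact Ldr_unique (mem_LL.1 ha) (mem_LL.1 hb) this
  have hmaps : ∀ a ∈ LL (pcomp n α ι), lam ι a ∈ LL ι := fun a ha =>
    lam_mem ι (isP_ι_of_LLcomp α ι ha)
  have hcard : (LL ι).card ≤ (LL (pcomp n α ι)).card := by
    rw [← prank_eq_card_LL, ← prank_eq_card_LL, hrk]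
  intro i₀ hi₀
  obtain ⟨m, hm, hm'⟩ := Finset.surj_on_of_inj_on_of_card_le (fun a _ => lam ι a)
    (fun a ha => hmaps a ha) (fun a b ha hb h => hinj a b ha hb h) hcard i₀ hi₀
  exact ⟨m, hm, hm'⟩

theorem DPM_pcomp (hrk : prank n (pcomp n α ι) = prank n ι) {a b : Fin n} (ha : isP ι (Sum.inl a)) (hb : isP ι (Sum.inl b))
    (h : pcomp n α ι (Sum.inl a) (Sum.inl b)) : ι (Sum.inl a) (Sum.inl b) := by
  obtain ⟨m, hm, hm'⟩ := lam_surj α ι hrk (lam ι a) (lam_mem ι ha)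
  obtain ⟨m', hm2, hm2'⟩ := lam_surj α ι hrk (lam ι b) (lam_mem ι hb)
  -- pcomp relates m and m'
  have hma : ι (Sum.inl m) (Sum.inl a) :=
    ι.trans' (hm' ▸ lam_rel ι m) (ι.symm' (lam_rel ι a))
  have hmb : ι (Sum.inl m') (Sum.inl b) :=
    ι.trans' (hm2' ▸ lam_rel ι m') (ι.symm' (lam_rel ι b))
  have : pcomp n α ι (Sum.inl m) (Sum.inl m') :=
    (pcomp n α ι).trans' (ι_le_pcomp α ι hma)
      ((pcomp n α ι).trans' h ((pcomp n α ι).symm' (ι_le_pcomp α ι hmb)))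
  have hmm : m = m' := Ldr_unique (mem_LL.1 hm) (mem_LL.1 hm2) this
  subst hmm
  exact ι.trans' (ι.symm' hma) hmb

theorem DPM_NN (hrk : prank n (pcomp n α ι) = prank n ι) {x y : DVert n} (hx : isP ι x) (hy : isP ι y)
    (h : NN α ι x y) : ι x y := by
  obtain ⟨a, ha⟩ := hx.1
  obtain ⟨b, hb⟩ := hy.1
  have hab : NN α ι (Sum.inl a) (Sum.inl b) :=
    (NN α ι).trans' (NN_of_bot α ι (ι.symm' ha))
      ((NN α ι).trans' h (NN_of_bot α ι hb))
  have := DPM_pcomp α ι hrk ((isP_congr ι ha).1 hx) ((isP_congr ι hb).1 hy)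
    ((pcomp_bb α ι).2 hab)
  exact ι.trans' ha (ι.trans' this (ι.symm' hb))

theorem PROPKEEP (hrk : prank n (pcomp n α ι) = prank n ι) {a : Fin n} (ha : isP ι (Sum.inl a)) :
    isP (pcomp n α ι) (Sum.inl a) := by
  obtain ⟨m, hm, hm'⟩ := lam_surj α ι hrk (lam ι a) (lam_mem ι ha)
  have hma : ι (Sum.inl m) (Sum.inl a) :=
    ι.trans' (hm' ▸ lam_rel ι m) (ι.symm' (lam_rel ι a))
  exact (isP_congr (pcomp n α ι) (ι_le_pcomp α ι hma)).1 (mem_LL.1 hm).1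

theorem BOTSAME (hrk : prank n (pcomp n α ι) = prank n ι) {a b : Fin n} (hb : isP ι (Sum.inl b)) :
    NN α ι (Sum.inl a) (Sum.inl b) ↔ ι (Sum.inl a) (Sum.inl b) := by
  constructor
  · intro h
    rcases (upsup_ll ι (BtS α)).1 h with h' | ⟨p, q, h1, _, h3⟩
    · exact h'
    · have ha : isP ι (Sum.inl a) := ⟨⟨a, ι.refl' _⟩, ⟨p, h1⟩⟩
      exact DPM_NN α ι hrk ha hb h
  · exact fun h => NN_of_bot α ι h

theorem LL_comp_eq (hrk : prank n (pcomp n α ι) = prank n ι) : LL (pcomp n α ι) = LL ι := by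
  ext j
  simp only [mem_LL]
  constructor
  · intro hj
    refine ⟨isP_ι_of_LLcomp α ι (mem_LL.2 hj), fun j' hj' => ?_⟩
    exact hj.2 j' (ι_le_pcomp α ι hj')
  · intro hj
    refine ⟨PROPKEEP α ι hrk hj.1, fun j' hj' => ?_⟩
    have : NN α ι (Sum.inl j') (Sum.inl j) :=
      (NN α ι).symm' ((pcomp_bb α ι).1 hj')
    exact hj.2 j' (ι.symm' ((BOTSAME α ι hrk hj.1).1 this))

end RankA
end PP
namespace PP
variable {n : ℕ}

section Star
variable (ι : Setoid (DVert n))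

theorem iota_swap (hι : pstar n ι = ι) (x y : DVert n) : ι x.swap y.swap ↔ ι x y := by
  conv_rhs => rw [← hι]
  exact Iff.rfl

theorem iota_lr_swap (hι : pstar n ι = ι) {a b : Fin n}
    (h : ι (Sum.inl a) (Sum.inr b)) : ι (Sum.inl b) (Sum.inr a) :=
  ι.symm' ((iota_swap ι hι (Sum.inr a) (Sum.inl b)).1 h)

theorem isP_swap (hι : pstar n ι = ι) (x : DVert n) : isP ι x.swap ↔ isP ι x := by
  unfold isP
  constructor
  · rintro ⟨⟨i, hi⟩, ⟨j, hj⟩⟩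
    exact ⟨⟨j, (iota_swap ι hι x (Sum.inl j)).1 hj⟩,
      ⟨i, (iota_swap ι hι x (Sum.inr i)).1 hi⟩⟩
  · rintro ⟨⟨i, hi⟩, ⟨j, hj⟩⟩
    exact ⟨⟨j, (iota_swap ι hι x (Sum.inr j)).2 hj⟩,
      ⟨i, (iota_swap ι hι x (Sum.inl i)).2 hi⟩⟩

/-- the matched primed leader in `ι` (via `⋆`-symmetry also an unprimed leader) -/
def istar (i : Fin n) : Fin n :=
  if h : ∃ j, ι (Sum.inl i) (Sum.inr j) then lR ι (Sum.inl i) h else i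

theorem istar_rel {i : Fin n} (h : ∃ j, ι (Sum.inl i) (Sum.inr j)) :
    ι (Sum.inl i) (Sum.inr (istar ι i)) := by
  unfold istar
  rw [dif_pos h]
  exact lR_rel ι (Sum.inl i) h

theorem istar_min {i j : Fin n} (h : ι (Sum.inl i) (Sum.inr j)) : istar ι i ≤ j := by
  unfold istar
  rw [dif_pos ⟨j, h⟩]
  exact lR_min ι (Sum.inl i) ⟨j, h⟩ h

theorem istar_eq_lR {i : Fin n} (h : ∃ j, ι (Sum.inl i) (Sum.inr j)) :
    lR ι (Sum.inl i) h = istar ι i := by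
  unfold istar
  rw [dif_pos h]

theorem istar_mem (hι : pstar n ι = ι) {i : Fin n} (hi : i ∈ LL ι) :
    istar ι i ∈ LL ι := by
  have hex : ∃ j, ι (Sum.inl i) (Sum.inr j) := (mem_LL.1 hi).1.2
  have hrel : ι (Sum.inl (istar ι i)) (Sum.inr i) := iota_lr_swap ι hι (istar_rel ι hex)
  refine mem_LL.2 ⟨⟨⟨istar ι i, ι.refl' _⟩, ⟨i, hrel⟩⟩, ?_⟩
  intro j hj
  have h1 : ι (Sum.inl j) (Sum.inr i) := ι.trans' (ι.symm' hj) hrel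
  have h2 : ι (Sum.inl i) (Sum.inr j) := iota_lr_swap ι hι h1
  exact istar_min ι h2

theorem istar_istar (hι : pstar n ι = ι) {i : Fin n} (hi : i ∈ LL ι) :
    istar ι (istar ι i) = i := by
  have hex : ∃ j, ι (Sum.inl i) (Sum.inr j) := (mem_LL.1 hi).1.2
  have hrel : ι (Sum.inl (istar ι i)) (Sum.inr i) := iota_lr_swap ι hι (istar_rel ι hex)
  refine le_antisymm (istar_min ι hrel) ?_
  have hrel2 : ι (Sum.inl (istar ι i)) (Sum.inr (istar ι (istar ι i))) :=
    istar_rel ι ⟨i, hrel⟩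
  have h3 : ι (Sum.inl (istar ι (istar ι i))) (Sum.inr (istar ι i)) :=
    iota_lr_swap ι hι hrel2
  have h4 : ι (Sum.inl (istar ι (istar ι i))) (Sum.inl i) := by
    have h5 : ι (Sum.inl i) (Sum.inr (istar ι i)) := istar_rel ι hex
    exact ι.trans' h3 (ι.symm' h5)
  exact (mem_LL.1 hi).2 _ (ι.symm' h4)

theorem RR_eq_LL (hι : pstar n ι = ι) : RR ι = LL ι := by
  ext j
  simp only [mem_RR, mem_LL]
  unfold Rdr Ldr
  constructor
  · rintro ⟨h1, h2⟩
    refine ⟨(isP_swap ι hι (Sum.inl j)).1 h1, fun t ht => h2 t ?_⟩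
    exact (iota_swap ι hι (Sum.inl j) (Sum.inl t)).2 ht
  · rintro ⟨h1, h2⟩
    refine ⟨(isP_swap ι hι (Sum.inl j)).2 h1, fun t ht => h2 t ?_⟩
    exact (iota_swap ι hι (Sum.inl j) (Sum.inl t)).1 ht

end Star

section NdSec
variable (ρ ι : Setoid (DVert n))

theorem Nd_eq_pstar (hι : pstar n ι = ι) :
    ι ⊔ downS (BtS ρ) = pstar n (NN ρ ι) := by
  show ι ⊔ downS (BtS ρ) = pstar n (ι ⊔ upS (BtS ρ))
  rw [pstar_sup, pstar_upS, hι]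

theorem DPM_Nd (hι : pstar n ι = ι) (h2 : prank n (pcomp n ρ ι) = prank n ι)
    {x y : DVert n} (hx : isP ι x) (hy : isP ι y)
    (h : (ι ⊔ downS (BtS ρ)) x y) : ι x y := by
  rw [Nd_eq_pstar ρ ι hι] at h
  have h' : NN ρ ι x.swap y.swap := h
  have := DPM_NN ρ ι h2 ((isP_swap ι hι x).2 hx) ((isP_swap ι hι y).2 hy) h'
  exact (iota_swap ι hι x y).1 this

end NdSec

section MclsSec
variable (α' ρ ι : Setoid (DVert n))

/-- description of the class of a propagating `ι`-leader in the two-sided closure -/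
theorem Mcls (hι : pstar n ι = ι) (h2 : prank n (pcomp n ρ ι) = prank n ι)
    (hα : prank n (pcomp n α' ι) = prank n ι) {i : Fin n} (hi : i ∈ LL ι) :
    ∀ x : DVert n, (NN α' ι ⊔ downS (BtS ρ)) x (Sum.inl i) ↔
      (match x with
       | Sum.inl a => (ι ⊔ downS (BtS ρ)) (Sum.inl a) (Sum.inl i)
       | Sum.inr p => NN α' ι (Sum.inr p) (Sum.inl i)) := by
  set Nd := ι ⊔ downS (BtS ρ) with hNd
  set ZM : Set (DVert n) := (fun x =>
    match x with
    | Sum.inl a => Nd (Sum.inl a) (Sum.inl i)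
    | Sum.inr p => NN α' ι (Sum.inr p) (Sum.inl i)) with hZM
  have hiP : isP ι (Sum.inl i) := (mem_LL.1 hi).1
  have hstep : ∀ x y : DVert n, NN α' ι x y → x ∈ ZM → y ∈ ZM := by
    rintro (a | v) (b | w) hNN hx
    · rcases (upsup_ll ι (BtS α')).1 hNN with h' | ⟨p, q, h1, _, h3⟩
      · exact Nd.trans' (sup_left' (ι.symm' h')) hx
      · have ha : isP ι (Sum.inl a) := ⟨⟨a, ι.refl' _⟩, ⟨p, h1⟩⟩
        have hb : isP ι (Sum.inl b) := ⟨⟨b, ι.refl' _⟩, ⟨q, ι.symm' h3⟩⟩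
        have := DPM_NN α' ι hα ha hb hNN
        exact Nd.trans' (sup_left' (ι.symm' this)) hx
    · obtain ⟨p, h1, _⟩ := (upsup_lr ι (BtS α')).1 hNN
      have ha : isP ι (Sum.inl a) := ⟨⟨a, ι.refl' _⟩, ⟨p, h1⟩⟩
      have := DPM_Nd ρ ι hι h2 ha hiP hx
      exact (NN α' ι).trans' ((NN α' ι).symm' hNN) (NN_of_bot α' ι this)
    · have hbv : NN α' ι (Sum.inl b) (Sum.inl i) :=
        (NN α' ι).trans' ((NN α' ι).symm' hNN) hx
      obtain ⟨p, h1, _⟩ := (upsup_lr ι (BtS α')).1 ((NN α' ι).symm' hNN)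
      have hb : isP ι (Sum.inl b) := ⟨⟨b, ι.refl' _⟩, ⟨p, h1⟩⟩
      have := DPM_NN α' ι hα hb hiP hbv
      exact sup_left' this
    · exact (NN α' ι).trans' ((NN α' ι).symm' hNN) hx
  have hNNsat : NN α' ι ≤ memSetoid ZM := by
    intro x y h
    exact ⟨fun hx => hstep x y h hx, fun hy => hstep y x ((NN α' ι).symm' h) hy⟩
  have hdsat : downS (BtS ρ) ≤ memSetoid ZM := by
    rintro x y (rfl | ⟨p, q, hpq, rfl, rfl⟩)
    · exact Iff.rfl
    · constructor
      · intro hx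
        exact Nd.trans' (sup_right' (Or.inr ⟨q, p, (BtS ρ).symm' hpq, rfl, rfl⟩)) hx
      · intro hy
        exact Nd.trans' (sup_right' (Or.inr ⟨p, q, hpq, rfl, rfl⟩)) hy
  have hsat : (NN α' ι ⊔ downS (BtS ρ)) ≤ memSetoid ZM := sup_le hNNsat hdsat
  have hZle : ∀ x ∈ ZM, (NN α' ι ⊔ downS (BtS ρ)) x (Sum.inl i) := by
    rintro (a | v) hx
    · have : Nd ≤ NN α' ι ⊔ downS (BtS ρ) := by
        refine sup_le ?_ le_sup_right
        intro x y h
        exact sup_left' (NN_of_bot α' ι h)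
      exact this hx
    · exact sup_left' hx
  intro x
  constructor
  · intro h
    have := hsat h
    exact this.2 (by show Nd (Sum.inl i) (Sum.inl i); exact Nd.refl' _)
  · intro hx
    exact hZle x hx

end MclsSec
end PP
namespace PP
variable {n : ℕ}

section BSec
variable (ρ ι : Setoid (DVert n))

theorem propI_of_bt {α : Setoid (DVert n)} {p t : Fin n}
    (h : pcomp n α ι (Sum.inl p) (Sum.inr t)) : isP ι (Sum.inl p) := by
  obtain ⟨p', hp'⟩ := pcomp_bt_exists α ι h
  exact ⟨⟨p, ι.refl' _⟩, ⟨p', hp'⟩⟩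

variable (hι : pstar n ι = ι) (h2 : prank n (pcomp n ρ ι) = prank n ι)
include hι h2

theorem NdNN {i : Fin n} (hi : i ∈ LL ι) (p : Fin n) :
    (ι ⊔ downS (BtS ρ)) (Sum.inl p) (Sum.inl i) ↔
      NN ρ ι (Sum.inr p) (Sum.inl (istar ι i)) := by
  have hstar : ι (Sum.inl (istar ι i)) (Sum.inr i) :=
    iota_lr_swap ι hι (istar_rel ι (mem_LL.1 hi).1.2)
  have hb : NN ρ ι (Sum.inl (istar ι i)) (Sum.inr i) := NN_of_bot ρ ι hstar
  have hps : (ι ⊔ downS (BtS ρ)) (Sum.inl p) (Sum.inl i) ↔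
      NN ρ ι (Sum.inr p) (Sum.inr i) := by
    rw [Nd_eq_pstar ρ ι hι]
    exact Iff.rfl
  rw [hps]
  exact ⟨fun h => (NN ρ ι).trans' h ((NN ρ ι).symm' hb),
    fun h => (NN ρ ι).trans' h hb⟩

theorem Nd_le_M (α' : Setoid (DVert n)) :
    ι ⊔ downS (BtS ρ) ≤ NN α' ι ⊔ downS (BtS ρ) := by
  refine sup_le ?_ le_sup_right
  intro x y h
  exact sup_left' (NN_of_bot α' ι h)


theorem mid_rel_of_Nd {p i : Fin n}
    (h : (ι ⊔ downS (BtS ρ)) (Sum.inl p) (Sum.inl i)) :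
    glue n (pcomp n ρ ι) (pstar n ρ) (Sum.inr (Sum.inl i)) (Sum.inr (Sum.inl p)) := by
  set G := glue n (pcomp n ρ ι) (pstar n ρ) with hG
  have hfin : (BtS ι ⊔ BtS ρ) p i := (downsup_ll ι (BtS ρ)).1 h
  have hpb : (BtS ι ⊔ BtS ρ) ≤ ⟨fun p q => G (Sum.inr (Sum.inl p)) (Sum.inr (Sum.inl q)),
      ⟨fun _ => G.refl' _, G.symm', G.trans'⟩⟩ := by
    refine sup_le ?_ ?_
    · intro p q hpq
      exact glue_of_gen (pcomp n ρ ι) (pstar n ρ)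
        (Or.inr ⟨Sum.inl p, Sum.inl q, pcomp_of_bot ρ ι hpq, rfl, rfl⟩)
    · intro p q hpq
      exact glue_of_gen (pcomp n ρ ι) (pstar n ρ)
        (Or.inl ⟨Sum.inr p, Sum.inr q, (hpq : ρ (Sum.inl p) (Sum.inl q)), rfl, rfl⟩)
  exact G.symm' (hpb hfin)

/-- the glued class (in `B = (ρ∘ι)∘ρ⋆`) of the middle vertex `i`, for `i ∈ LL ι` -/
def Z3 (i : Fin n) : Set (TVert n) := fun x =>
  match x with
  | Sum.inl a => pcomp n ρ ι (Sum.inl (istar ι i)) (Sum.inr a)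
  | Sum.inr (Sum.inl p) => (ι ⊔ downS (BtS ρ)) (Sum.inl p) (Sum.inl i)
  | Sum.inr (Sum.inr t) => pcomp n ρ ι (Sum.inl i) (Sum.inr t)

theorem glue3_mid_iff {i : Fin n} (hi : i ∈ LL ι) :
    ∀ w, glue n (pcomp n ρ ι) (pstar n ρ) (Sum.inr (Sum.inl i)) w ↔ w ∈ Z3 ρ ι i := by
  set σ1 := pcomp n ρ ι with hσ1
  have hMc := Mcls ρ ρ ι hι h2 h2 hi
  refine eqvgen_class_eq (ggen σ1 (pstar n ρ)) (Z3 ρ ι i) ?_ ?_ ?_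
  · rintro x y (⟨u, v, h, rfl, rfl⟩ | ⟨u, v, h, rfl, rfl⟩)
    · -- bottom generator: pstar ρ
      rcases u with a | p <;> rcases v with b | q <;>
        simp only [embBot_inl, embBot_inr, Z3, Set.mem_def]
      · -- bot a bot b : ρ (inr a)(inr b)
        have hab : σ1 (Sum.inr a) (Sum.inr b) := pcomp_of_top ρ ι h
        exact ⟨fun hx => σ1.trans' hx hab, fun hx => σ1.trans' hx (σ1.symm' hab)⟩
      · -- bot a mid q : h : pstar ρ (inl a)(inr q), i.e. ρ (inr a)(inl q)
        have hq : ρ (Sum.inl q) (Sum.inr a) := ρ.symm' h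
        constructor
        · intro hx
          obtain ⟨r, h1, h3⟩ := (pcomp_bt ρ ι).1 hx
          have : ρ (Sum.inl q) (Sum.inl r) := ρ.trans' hq (ρ.symm' h3)
          have hNN : NN ρ ι (Sum.inr q) (Sum.inl (istar ι i)) :=
            (NN ρ ι).trans' (NN_of_Bt ρ ι this) h1
          exact (NdNN ρ ι hι h2 hi q).2 hNN
        · intro hx
          have hNN := (NdNN ρ ι hι h2 hi q).1 hx
          exact (pcomp_bt ρ ι).2 ⟨q, hNN, hq⟩
      · -- mid p bot b : h : pstar ρ (inr p)(inl b), i.e. ρ (inl p)(inr b)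
        have hp : ρ (Sum.inl p) (Sum.inr b) := h
        constructor
        · intro hx
          have hNN := (NdNN ρ ι hι h2 hi p).1 hx
          exact (pcomp_bt ρ ι).2 ⟨p, hNN, hp⟩
        · intro hx
          obtain ⟨r, h1, h3⟩ := (pcomp_bt ρ ι).1 hx
          have : ρ (Sum.inl p) (Sum.inl r) := ρ.trans' hp (ρ.symm' h3)
          have hNN : NN ρ ι (Sum.inr p) (Sum.inl (istar ι i)) :=
            (NN ρ ι).trans' (NN_of_Bt ρ ι this) h1
          exact (NdNN ρ ι hι h2 hi p).2 hNN
      · -- mid p mid q : h : ρ (inl p)(inl q)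
        have hstep : (ι ⊔ downS (BtS ρ)) (Sum.inl p) (Sum.inl q) :=
          sup_right' (Or.inr ⟨p, q, h, rfl, rfl⟩)
        exact ⟨fun hx => (ι ⊔ downS (BtS ρ)).trans' ((ι ⊔ downS (BtS ρ)).symm' hstep) hx,
          fun hx => (ι ⊔ downS (BtS ρ)).trans' hstep hx⟩
    · -- top generator: σ1
      rcases u with p | s <;> rcases v with q | t <;>
        simp only [embTop_inl, embTop_inr, Z3, Set.mem_def]
      · -- mid p mid q : h : σ1 (inl p)(inl q)
        have hNN : NN ρ ι (Sum.inl p) (Sum.inl q) := (pcomp_bb ρ ι).1 h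
        constructor
        · intro hx
          have hM : (NN ρ ι ⊔ downS (BtS ρ)) (Sum.inl q) (Sum.inl i) :=
            (NN ρ ι ⊔ downS (BtS ρ)).trans' (sup_left' ((NN ρ ι).symm' hNN))
              (Nd_le_M ρ ι hι h2 ρ hx)
          exact (hMc (Sum.inl q)).1 hM
        · intro hx
          have hM : (NN ρ ι ⊔ downS (BtS ρ)) (Sum.inl p) (Sum.inl i) :=
            (NN ρ ι ⊔ downS (BtS ρ)).trans' (sup_left' hNN) (Nd_le_M ρ ι hι h2 ρ hx)
          exact (hMc (Sum.inl p)).1 hM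
      · -- mid p top t : h : σ1 (inl p)(inr t)
        constructor
        · intro hx
          obtain ⟨r, h1, h3⟩ := (pcomp_bt ρ ι).1 h
          have hM : (NN ρ ι ⊔ downS (BtS ρ)) (Sum.inr r) (Sum.inl i) :=
            (NN ρ ι ⊔ downS (BtS ρ)).trans' (sup_left' h1) (Nd_le_M ρ ι hι h2 ρ hx)
          have := (hMc (Sum.inr r)).1 hM
          exact (pcomp_bt ρ ι).2 ⟨r, this, h3⟩
        · intro hx
          have : σ1 (Sum.inl p) (Sum.inl i) := σ1.trans' h (σ1.symm' hx)
          have hM : (NN ρ ι ⊔ downS (BtS ρ)) (Sum.inl p) (Sum.inl i) :=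
            sup_left' ((pcomp_bb ρ ι).1 this)
          exact (hMc (Sum.inl p)).1 hM
      · -- top s mid q
        constructor
        · intro hx
          have : σ1 (Sum.inl q) (Sum.inl i) := σ1.trans' (σ1.symm' h) (σ1.symm' hx)
          have hM : (NN ρ ι ⊔ downS (BtS ρ)) (Sum.inl q) (Sum.inl i) :=
            sup_left' ((pcomp_bb ρ ι).1 this)
          exact (hMc (Sum.inl q)).1 hM
        · intro hx
          obtain ⟨r, h1, h3⟩ := (pcomp_bt ρ ι).1 (σ1.symm' h)
          have hM : (NN ρ ι ⊔ downS (BtS ρ)) (Sum.inr r) (Sum.inl i) :=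
            (NN ρ ι ⊔ downS (BtS ρ)).trans' (sup_left' h1) (Nd_le_M ρ ι hι h2 ρ hx)
          have := (hMc (Sum.inr r)).1 hM
          exact (pcomp_bt ρ ι).2 ⟨r, this, h3⟩
      · -- top s top t
        exact ⟨fun hx => σ1.trans' hx h, fun hx => σ1.trans' hx (σ1.symm' h)⟩
  · show (ι ⊔ downS (BtS ρ)) (Sum.inl i) (Sum.inl i)
    exact (ι ⊔ downS (BtS ρ)).refl' _
  · rintro (a | p | t) hz
    · -- bot a
      obtain ⟨r, h1, h3⟩ := (pcomp_bt ρ ι).1 (hz : σ1 (Sum.inl (istar ι i)) (Sum.inr a))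
      have hNd : (ι ⊔ downS (BtS ρ)) (Sum.inl r) (Sum.inl i) := (NdNN ρ ι hι h2 hi r).2 h1
      have hmm := mid_rel_of_Nd ρ ι hι h2 hNd
      refine (glue n σ1 (pstar n ρ)).trans' hmm ?_
      exact glue_of_gen σ1 (pstar n ρ) (Or.inl ⟨Sum.inr r, Sum.inl a, h3, rfl, rfl⟩)
    · exact mid_rel_of_Nd ρ ι hι h2 (hz : (ι ⊔ downS (BtS ρ)) (Sum.inl p) (Sum.inl i))
    · exact glue_of_gen σ1 (pstar n ρ)
        (Or.inr ⟨Sum.inl i, Sum.inr t, hz, rfl, rfl⟩)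

end BSec
end PP
namespace PP
variable {n : ℕ}

theorem lR_congr {σ σ' : Setoid (DVert n)} {x y : DVert n}
    (h : ∃ j, σ x (Sum.inr j)) (h' : ∃ j, σ' y (Sum.inr j))
    (hiff : ∀ t, σ x (Sum.inr t) ↔ σ' y (Sum.inr t)) : lR σ x h = lR σ' y h' :=
  le_antisymm (lR_min σ x h ((hiff _).2 (lR_rel σ' y h')))
    (lR_min σ' y h' ((hiff _).1 (lR_rel σ x h)))

section BSec2
variable (ρ ι : Setoid (DVert n)) (hι : pstar n ι = ι)
  (h2 : prank n (pcomp n ρ ι) = prank n ι)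
include hι h2

theorem clsB_bt {i a : Fin n} (hi : i ∈ LL ι)
    (ha : pcomp n ρ ι (Sum.inl (istar ι i)) (Sum.inr a)) (t : Fin n) :
    pcomp n (pcomp n ρ ι) (pstar n ρ) (Sum.inl a) (Sum.inr t) ↔
      pcomp n ρ ι (Sum.inl i) (Sum.inr t) := by
  set G := glue n (pcomp n ρ ι) (pstar n ρ) with hG
  have hba : G (Sum.inr (Sum.inl i)) (Sum.inl a) :=
    (glue3_mid_iff ρ ι hι h2 hi (Sum.inl a)).2 ha
  constructor
  · intro h
    have h' : G (Sum.inl a) (Sum.inr (Sum.inr t)) := h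
    exact (glue3_mid_iff ρ ι hι h2 hi (Sum.inr (Sum.inr t))).1 (G.trans' hba h')
  · intro h
    have h' : G (Sum.inr (Sum.inl i)) (Sum.inr (Sum.inr t)) :=
      (glue3_mid_iff ρ ι hι h2 hi (Sum.inr (Sum.inr t))).2 h
    exact G.trans' (G.symm' hba) h'

theorem clsB_bb {i a : Fin n} (hi : i ∈ LL ι)
    (ha : pcomp n ρ ι (Sum.inl (istar ι i)) (Sum.inr a)) (b : Fin n) :
    pcomp n (pcomp n ρ ι) (pstar n ρ) (Sum.inl a) (Sum.inl b) ↔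
      pcomp n ρ ι (Sum.inl (istar ι i)) (Sum.inr b) := by
  set G := glue n (pcomp n ρ ι) (pstar n ρ) with hG
  have hba : G (Sum.inr (Sum.inl i)) (Sum.inl a) :=
    (glue3_mid_iff ρ ι hι h2 hi (Sum.inl a)).2 ha
  constructor
  · intro h
    have h' : G (Sum.inl a) (Sum.inl b) := h
    exact (glue3_mid_iff ρ ι hι h2 hi (Sum.inl b)).1 (G.trans' hba h')
  · intro h
    have h' : G (Sum.inr (Sum.inl i)) (Sum.inl b) :=
      (glue3_mid_iff ρ ι hι h2 hi (Sum.inl b)).2 h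
    exact G.trans' (G.symm' hba) h'

theorem clsB_tt {i t : Fin n} (hi : i ∈ LL ι)
    (ht : pcomp n ρ ι (Sum.inl i) (Sum.inr t)) (t' : Fin n) :
    pcomp n (pcomp n ρ ι) (pstar n ρ) (Sum.inr t) (Sum.inr t') ↔
      pcomp n ρ ι (Sum.inl i) (Sum.inr t') := by
  set G := glue n (pcomp n ρ ι) (pstar n ρ) with hG
  have hba : G (Sum.inr (Sum.inl i)) (Sum.inr (Sum.inr t)) :=
    (glue3_mid_iff ρ ι hι h2 hi (Sum.inr (Sum.inr t))).2 ht
  constructor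
  · intro h
    have h' : G (Sum.inr (Sum.inr t)) (Sum.inr (Sum.inr t')) := h
    exact (glue3_mid_iff ρ ι hι h2 hi (Sum.inr (Sum.inr t'))).1 (G.trans' hba h')
  · intro h
    have h' : G (Sum.inr (Sum.inl i)) (Sum.inr (Sum.inr t')) :=
      (glue3_mid_iff ρ ι hι h2 hi (Sum.inr (Sum.inr t'))).2 h
    exact G.trans' (G.symm' hba) h'

theorem exists_leader_bt {p j : Fin n} (hp : pcomp n ρ ι (Sum.inl p) (Sum.inr j)) :
    ∃ i ∈ LL ι, pcomp n ρ ι (Sum.inl i) (Sum.inr j) := by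
  have hip : isP ι (Sum.inl p) := propI_of_bt ι hp
  refine ⟨lam ι p, lam_mem ι hip, ?_⟩
  exact (pcomp n ρ ι).trans'
    ((pcomp n ρ ι).symm' (pcomp_of_bot ρ ι (lam_rel ι p))) hp

theorem proppairB {a t : Fin n}
    (h : pcomp n (pcomp n ρ ι) (pstar n ρ) (Sum.inl a) (Sum.inr t)) :
    ∃ i ∈ LL ι, pcomp n ρ ι (Sum.inl (istar ι i)) (Sum.inr a) ∧
      pcomp n ρ ι (Sum.inl i) (Sum.inr t) := by
  set σ1 := pcomp n ρ ι with hσ1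
  set G := glue n σ1 (pstar n ρ) with hG
  obtain ⟨p, hNV, hst⟩ := (pcomp_bt σ1 (pstar n ρ)).1 h
  obtain ⟨i, hi, hit⟩ := exists_leader_bt ρ ι hι h2 hst
  have hpi : ι (Sum.inl p) (Sum.inl (lam ι p)) := lam_rel ι p
  have hNd : (ι ⊔ downS (BtS ρ)) (Sum.inl p) (Sum.inl (lam ι p)) := sup_left' hpi
  have hglue1 : G (Sum.inr (Sum.inl (lam ι p))) (Sum.inr (Sum.inl p)) :=
    mid_rel_of_Nd ρ ι hι h2 hNd
  have hglue2 : G (Sum.inr (Sum.inl p)) (Sum.inl a) := NN_to_glue σ1 (pstar n ρ) hNV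
  have hmem : (Sum.inl a : TVert n) ∈ Z3 ρ ι (lam ι p) := by
    refine (glue3_mid_iff ρ ι hι h2 (lam_mem ι (propI_of_bt ι hst)) (Sum.inl a)).1 ?_
    exact G.trans' hglue1 hglue2
  refine ⟨lam ι p, lam_mem ι (propI_of_bt ι hst), hmem, ?_⟩
  exact (pcomp n ρ ι).trans'
    ((pcomp n ρ ι).symm' (pcomp_of_bot ρ ι (lam_rel ι p))) hst

theorem LdrB_iff (j : Fin n) :
    Ldr (pcomp n (pcomp n ρ ι) (pstar n ρ)) j ↔ Rdr (pcomp n ρ ι) j := by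
  set σ1 := pcomp n ρ ι with hσ1
  set B := pcomp n (pcomp n ρ ι) (pstar n ρ) with hB
  constructor
  · rintro ⟨hP, hmin⟩
    obtain ⟨t, ht⟩ := hP.2
    obtain ⟨i, hi, hja, hjt⟩ := proppairB ρ ι hι h2 ht
    refine ⟨⟨⟨istar ι i, σ1.symm' hja⟩, ⟨j, σ1.refl' _⟩⟩, ?_⟩
    intro t' ht'
    have h1 : σ1 (Sum.inl (istar ι i)) (Sum.inr t') := σ1.trans' hja ht'
    have h2' : B (Sum.inl j) (Sum.inl t') := (clsB_bb ρ ι hι h2 hi hja t').2 h1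
    exact hmin t' h2'
  · rintro ⟨hP, hmin⟩
    obtain ⟨p, hp⟩ := hP.1
    obtain ⟨i', hi', hi't⟩ := exists_leader_bt ρ ι hι h2 (σ1.symm' hp)
    have hii : istar ι (istar ι i') = i' := istar_istar ι hι hi'
    have histar : istar ι i' ∈ LL ι := istar_mem ι hι hi'
    have hja : σ1 (Sum.inl (istar ι (istar ι i'))) (Sum.inr j) := by rw [hii]; exact hi't
    have hbots : σ1 (Sum.inl (istar ι (istar ι i'))) (Sum.inr j) := hja
    have hexr : ∃ t, σ1 (Sum.inl (istar ι i')) (Sum.inr t) :=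
      (PROPKEEP ρ ι h2 (mem_LL.1 histar).1).2
    obtain ⟨t₀, ht₀⟩ := hexr
    refine ⟨⟨⟨j, B.refl' _⟩, ⟨t₀, ?_⟩⟩, ?_⟩
    · exact (clsB_bt ρ ι hι h2 histar hja t₀).2 ht₀
    · intro b hb
      have h1 : σ1 (Sum.inl (istar ι (istar ι i'))) (Sum.inr b) :=
        (clsB_bb ρ ι hι h2 histar hja b).1 hb
      have h2' : σ1 (Sum.inr j) (Sum.inr b) := σ1.trans' (σ1.symm' hja) h1
      exact hmin b h2'

theorem RdrB_iff (j : Fin n) :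
    Rdr (pcomp n (pcomp n ρ ι) (pstar n ρ)) j ↔ Rdr (pcomp n ρ ι) j := by
  set σ1 := pcomp n ρ ι with hσ1
  set B := pcomp n (pcomp n ρ ι) (pstar n ρ) with hB
  constructor
  · rintro ⟨hP, hmin⟩
    obtain ⟨a, ha⟩ := hP.1
    obtain ⟨i, hi, hia, hit⟩ := proppairB ρ ι hι h2 (B.symm' ha)
    refine ⟨⟨⟨i, σ1.symm' hit⟩, ⟨j, σ1.refl' _⟩⟩, ?_⟩
    intro t' ht'
    have h1 : σ1 (Sum.inl i) (Sum.inr t') := σ1.trans' hit ht'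
    have h2' : B (Sum.inr j) (Sum.inr t') := (clsB_tt ρ ι hι h2 hi hit t').2 h1
    exact hmin t' h2'
  · rintro ⟨hP, hmin⟩
    obtain ⟨p, hp⟩ := hP.1
    obtain ⟨i, hi, hit⟩ := exists_leader_bt ρ ι hι h2 (σ1.symm' hp)
    have histar : istar ι i ∈ LL ι := istar_mem ι hι hi
    have hexb : ∃ a, σ1 (Sum.inl (istar ι i)) (Sum.inr a) :=
      (PROPKEEP ρ ι h2 (mem_LL.1 histar).1).2
    obtain ⟨a₀, ha₀⟩ := hexb
    refine ⟨⟨⟨a₀, ?_⟩, ⟨j, B.refl' _⟩⟩, ?_⟩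
    · exact B.symm' ((clsB_bt ρ ι hι h2 hi ha₀ j).2 hit)
    · intro t' ht'
      have h1 : σ1 (Sum.inl i) (Sum.inr t') := (clsB_tt ρ ι hι h2 hi hit t').1 ht'
      exact hmin t' (σ1.trans' (σ1.symm' hit) h1)

theorem LL_B_eq : LL (pcomp n (pcomp n ρ ι) (pstar n ρ)) = RR (pcomp n ρ ι) := by
  ext j
  rw [mem_LL, mem_RR]
  exact LdrB_iff ρ ι hι h2 j

theorem RR_B_eq : RR (pcomp n (pcomp n ρ ι) (pstar n ρ)) = RR (pcomp n ρ ι) := by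
  ext j
  rw [mem_RR, mem_RR]
  exact RdrB_iff ρ ι hι h2 j

end BSec2
end PP
namespace PP
variable {n : ℕ}

section TBSec
variable (τ ρ ι : Setoid (DVert n))

/-- the mid-connectivity of `glue n τ ρ` contains `TpS ρ ⊔ BtS τ` -/
theorem midTR {p q : Fin n} (h : (TpS ρ ⊔ BtS τ) p q) :
    glue n τ ρ (Sum.inr (Sum.inl p)) (Sum.inr (Sum.inl q)) := by
  set G := glue n τ ρ with hG
  have hle : (TpS ρ ⊔ BtS τ) ≤ ⟨fun p q => G (Sum.inr (Sum.inl p)) (Sum.inr (Sum.inl q)),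
      ⟨fun _ => G.refl' _, G.symm', G.trans'⟩⟩ := by
    refine sup_le ?_ ?_
    · intro p q hpq
      exact glue_of_gen τ ρ (Or.inl ⟨Sum.inr p, Sum.inr q, (hpq : ρ _ _), rfl, rfl⟩)
    · intro p q hpq
      exact glue_of_gen τ ρ (Or.inr ⟨Sum.inl p, Sum.inl q, (hpq : τ _ _), rfl, rfl⟩)
  exact hle h

theorem NN_le_NN' : NN ρ ι ≤ NN (pcomp n τ ρ) ι := by
  refine sup_le le_sup_left (le_trans (upS_mono ?_) le_sup_right)
  intro p q h
  exact pcomp_of_bot τ ρ h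

/-- `B`-related tops drop to `glue4` mid relations -/
theorem mid4_of_B {s t : Fin n}
    (h : pcomp n (pcomp n ρ ι) (pstar n ρ) (Sum.inr s) (Sum.inr t)) :
    glue n τ (pcomp n (pcomp n ρ ι) (pstar n ρ)) (Sum.inr (Sum.inl s)) (Sum.inr (Sum.inl t)) :=
  glue_of_gen τ _ (Or.inl ⟨Sum.inr s, Sum.inr t, h, rfl, rfl⟩)

theorem mid4_of_τ {s t : Fin n} (h : τ (Sum.inl s) (Sum.inl t)) :
    glue n τ (pcomp n (pcomp n ρ ι) (pstar n ρ)) (Sum.inr (Sum.inl s)) (Sum.inr (Sum.inl t)) :=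
  glue_of_gen τ _ (Or.inr ⟨Sum.inl s, Sum.inl t, h, rfl, rfl⟩)

theorem mid4_of_c5 {s t : Fin n} (h : (TpS ρ ⊔ BtS τ) s t) :
    glue n τ (pcomp n (pcomp n ρ ι) (pstar n ρ)) (Sum.inr (Sum.inl s)) (Sum.inr (Sum.inl t)) := by
  set G := glue n τ (pcomp n (pcomp n ρ ι) (pstar n ρ)) with hG
  have hle : (TpS ρ ⊔ BtS τ) ≤ ⟨fun p q => G (Sum.inr (Sum.inl p)) (Sum.inr (Sum.inl q)),
      ⟨fun _ => G.refl' _, G.symm', G.trans'⟩⟩ := by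
    refine sup_le ?_ ?_
    · intro p q hpq
      exact mid4_of_B τ ρ ι (pcomp_of_top _ _ (pcomp_of_top ρ ι (hpq : ρ _ _)))
    · intro p q hpq
      exact mid4_of_τ τ ρ ι hpq
  exact hle h

theorem σ1_tt_mixed {r r' s s' : Fin n} (hs : ρ (Sum.inl r) (Sum.inr s))
    (hN : NN ρ ι (Sum.inr r) (Sum.inr r')) (hs' : ρ (Sum.inl r') (Sum.inr s')) :
    pcomp n ρ ι (Sum.inr s) (Sum.inr s') :=
  (pcomp_tt ρ ι).2 (Or.inr ⟨r, r', hs, hN, hs'⟩)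

/-- the bridge setoid for transporting row-2 connections to `glue4` mid connections -/
def Ebr : Setoid (Fin n) where
  r a b := NN ρ ι (Sum.inr a) (Sum.inr b) ∨
    ∃ a' b' sa sb, NN ρ ι (Sum.inr a) (Sum.inr a') ∧ ρ (Sum.inl a') (Sum.inr sa) ∧
      glue n τ (pcomp n (pcomp n ρ ι) (pstar n ρ)) (Sum.inr (Sum.inl sa)) (Sum.inr (Sum.inl sb)) ∧
      ρ (Sum.inl b') (Sum.inr sb) ∧ NN ρ ι (Sum.inr b') (Sum.inr b)
  iseqv := by
    set G := glue n τ (pcomp n (pcomp n ρ ι) (pstar n ρ)) with hG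
    constructor
    · intro a; exact Or.inl ((NN ρ ι).refl' _)
    · rintro a b (h | ⟨a', b', sa, sb, h1, h2, h3, h4, h5⟩)
      · exact Or.inl ((NN ρ ι).symm' h)
      · exact Or.inr ⟨b', a', sb, sa, (NN ρ ι).symm' h5, h4, G.symm' h3, h2,
          (NN ρ ι).symm' h1⟩
    · rintro a b c (h | ⟨a', b', sa, sb, h1, h2, h3, h4, h5⟩)
        (h' | ⟨a'', b'', sa', sb', h1', h2', h3', h4', h5'⟩)
      · exact Or.inl ((NN ρ ι).trans' h h')
      · exact Or.inr ⟨a'', b'', sa', sb', (NN ρ ι).trans' h h1', h2', h3', h4', h5'⟩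
      · exact Or.inr ⟨a', b', sa, sb, h1, h2, h3, h4, (NN ρ ι).trans' h5 h'⟩
      · refine Or.inr ⟨a', b'', sa, sb', h1, h2, ?_, h4', h5'⟩
        have hmid : pcomp n ρ ι (Sum.inr sb) (Sum.inr sa') :=
          σ1_tt_mixed ρ ι h4 ((NN ρ ι).trans' h5 h1') h2'
        have hG2 : G (Sum.inr (Sum.inl sb)) (Sum.inr (Sum.inl sa')) :=
          mid4_of_B τ ρ ι (pcomp_of_top _ _ hmid)
        exact G.trans' h3 (G.trans' hG2 h3')

theorem Ebr_contains : (TpS ι ⊔ BtS (pcomp n τ ρ)) ≤ Ebr τ ρ ι := by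
  refine sup_le ?_ ?_
  · intro a b h
    exact Or.inl (NN_of_bot ρ ι (h : ι _ _))
  · intro a b h
    have hNN : NN τ ρ (Sum.inl a) (Sum.inl b) := (pcomp_bb τ ρ).1 h
    rcases (upsup_ll ρ (BtS τ)).1 hNN with h' | ⟨w₁, w₂, hw1, htt, hw2⟩
    · exact Or.inl (NN_of_Bt ρ ι h')
    · exact Or.inr ⟨a, b, w₁, w₂, (NN ρ ι).refl' _, hw1, mid4_of_c5 τ ρ ι htt,
        ρ.symm' hw2, (NN ρ ι).refl' _⟩

theorem E_bridge {r p s₁ s₀ : Fin n}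
    (h : (TpS ι ⊔ BtS (pcomp n τ ρ)) r p)
    (h1 : ρ (Sum.inl r) (Sum.inr s₁)) (h0 : ρ (Sum.inl p) (Sum.inr s₀)) :
    glue n τ (pcomp n (pcomp n ρ ι) (pstar n ρ)) (Sum.inr (Sum.inl s₁)) (Sum.inr (Sum.inl s₀)) := by
  set G := glue n τ (pcomp n (pcomp n ρ ι) (pstar n ρ)) with hG
  rcases Ebr_contains τ ρ ι h with h' | ⟨a', b', sa, sb, ha1, ha2, ha3, ha4, ha5⟩
  · exact mid4_of_B τ ρ ι (pcomp_of_top _ _ (σ1_tt_mixed ρ ι h1 h' h0))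
  · have hx : G (Sum.inr (Sum.inl s₁)) (Sum.inr (Sum.inl sa)) :=
      mid4_of_B τ ρ ι (pcomp_of_top _ _ (σ1_tt_mixed ρ ι h1 ha1 ha2))
    have hy : G (Sum.inr (Sum.inl sb)) (Sum.inr (Sum.inl s₀)) :=
      mid4_of_B τ ρ ι (pcomp_of_top _ _ (σ1_tt_mixed ρ ι ha4 ha5 h0))
    exact G.trans' hx (G.trans' ha3 hy)

/-- mid-attachment transport: attached vertices of the `glue4` class stay attached -/
theorem ATTACH_TR {i s₀ s r p : Fin n}
    (hp : NN (pcomp n τ ρ) ι (Sum.inr p) (Sum.inl i)) (hps₀ : ρ (Sum.inl p) (Sum.inr s₀))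
    (hc5 : (TpS ρ ⊔ BtS τ) s₀ s) (hr : ρ (Sum.inl r) (Sum.inr s)) :
    NN (pcomp n τ ρ) ι (Sum.inr r) (Sum.inl i) := by
  have hU : pcomp n τ ρ (Sum.inl p) (Sum.inl r) := by
    have g1 : glue n τ ρ (Sum.inl p) (Sum.inr (Sum.inl s₀)) :=
      glue_of_gen τ ρ (Or.inl ⟨Sum.inl p, Sum.inr s₀, hps₀, rfl, rfl⟩)
    have g2 := midTR τ ρ hc5
    have g3 : glue n τ ρ (Sum.inr (Sum.inl s)) (Sum.inl r) :=
      glue_of_gen τ ρ (Or.inl ⟨Sum.inr s, Sum.inl r, ρ.symm' hr, rfl, rfl⟩)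
    exact (glue n τ ρ).trans' g1 ((glue n τ ρ).trans' g2 g3)
  exact (NN (pcomp n τ ρ) ι).trans'
    ((NN (pcomp n τ ρ) ι).symm' (NN_of_Bt (pcomp n τ ρ) ι hU)) hp

end TBSec
end PP
namespace PP
variable {n : ℕ}

theorem exists_leader_bt_gen (α ι : Setoid (DVert n)) {p j : Fin n}
    (hp : pcomp n α ι (Sum.inl p) (Sum.inr j)) :
    ∃ i ∈ LL ι, pcomp n α ι (Sum.inl i) (Sum.inr j) := by
  refine ⟨lam ι p, lam_mem ι (propI_of_bt ι hp), ?_⟩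
  exact (pcomp n α ι).trans' ((pcomp n α ι).symm' (pcomp_of_bot α ι (lam_rel ι p))) hp

/-- the `glue4`-class of the `ι`-propagating class of leader `i` in `τ∘((ρ∘ι)∘ρ⋆)` -/
def Y (τ ρ ι : Setoid (DVert n)) (i : Fin n) : Set (TVert n) := fun x =>
  match x with
  | Sum.inl a => pcomp n ρ ι (Sum.inl (istar ι i)) (Sum.inr a)
  | Sum.inr (Sum.inl s) => ∃ s₀ p, NN (pcomp n τ ρ) ι (Sum.inr p) (Sum.inl i) ∧
      ρ (Sum.inl p) (Sum.inr s₀) ∧ (TpS ρ ⊔ BtS τ) s₀ s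
  | Sum.inr (Sum.inr t) => pcomp n (pcomp n τ ρ) ι (Sum.inl i) (Sum.inr t)

section TBSec2
variable (τ ρ ι : Setoid (DVert n)) (hι : pstar n ι = ι)
  (h2 : prank n (pcomp n ρ ι) = prank n ι)
  (h1 : prank n (pcomp n (pcomp n τ ρ) ι) = prank n ι)
include hι h2 h1

theorem glue4_bot_iff {i : Fin n} (hi : i ∈ LL ι) {a₀ : Fin n}
    (ha₀ : pcomp n ρ ι (Sum.inl (istar ι i)) (Sum.inr a₀)) :
    ∀ w, glue n τ (pcomp n (pcomp n ρ ι) (pstar n ρ)) (Sum.inl a₀) w ↔ w ∈ Y τ ρ ι i := by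
  set σ1 := pcomp n ρ ι with hσ1
  set B := pcomp n (pcomp n ρ ι) (pstar n ρ) with hB
  set τρ := pcomp n τ ρ with hτρ
  set X := pcomp n (pcomp n τ ρ) ι with hX
  have hMc := Mcls (pcomp n τ ρ) ρ ι hι h2 h1 hi
  have hiP : isP ι (Sum.inl i) := (mem_LL.1 hi).1
  refine eqvgen_class_eq (ggen τ B) (Y τ ρ ι i) ?_ ?_ ?_
  · rintro x y (⟨u, v, h, rfl, rfl⟩ | ⟨u, v, h, rfl, rfl⟩)
    · -- bottom generator : B
      rcases u with a | s <;> rcases v with b | s' <;>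
        simp only [embBot_inl, embBot_inr, Y, Set.mem_def]
      · -- bot a bot b
        constructor
        · intro hx; exact (clsB_bb ρ ι hι h2 hi hx b).1 h
        · intro hx; exact (clsB_bb ρ ι hι h2 hi hx a).1 (B.symm' h)
      · -- bot a mid s'
        constructor
        · intro hx
          have hs : σ1 (Sum.inl i) (Sum.inr s') := (clsB_bt ρ ι hι h2 hi hx s').1 h
          obtain ⟨r, hr1, hr3⟩ := (pcomp_bt ρ ι).1 hs
          exact ⟨s', r, NN_le_NN' τ ρ ι hr1, hr3, (TpS ρ ⊔ BtS τ).refl' _⟩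
        · rintro ⟨s₀, p, hp, hps₀, hc5⟩
          obtain ⟨j, hj, hja, hjs⟩ := proppairB ρ ι hι h2 h
          obtain ⟨r, hr1, hr3⟩ := (pcomp_bt ρ ι).1 hjs
          have hri : NN (pcomp n τ ρ) ι (Sum.inr r) (Sum.inl i) :=
            ATTACH_TR τ ρ ι hp hps₀ hc5 hr3
          have hrj : NN (pcomp n τ ρ) ι (Sum.inr r) (Sum.inl j) := NN_le_NN' τ ρ ι hr1
          have hji : NN (pcomp n τ ρ) ι (Sum.inl j) (Sum.inl i) :=
            (NN (pcomp n τ ρ) ι).trans' ((NN (pcomp n τ ρ) ι).symm' hrj) hri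
          have hjιi : ι (Sum.inl j) (Sum.inl i) :=
            DPM_NN (pcomp n τ ρ) ι h1 (mem_LL.1 hj).1 hiP hji
          have hjeq : j = i := Ldr_unique (mem_LL.1 hj) (mem_LL.1 hi) hjιi
          rw [hjeq] at hja
          exact hja
      · -- mid s bot b
        constructor
        · rintro ⟨s₀, p, hp, hps₀, hc5⟩
          obtain ⟨j, hj, hja, hjs⟩ := proppairB ρ ι hι h2 (B.symm' h)
          obtain ⟨r, hr1, hr3⟩ := (pcomp_bt ρ ι).1 hjs
          have hri : NN (pcomp n τ ρ) ι (Sum.inr r) (Sum.inl i) :=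
            ATTACH_TR τ ρ ι hp hps₀ hc5 hr3
          have hrj : NN (pcomp n τ ρ) ι (Sum.inr r) (Sum.inl j) := NN_le_NN' τ ρ ι hr1
          have hji : NN (pcomp n τ ρ) ι (Sum.inl j) (Sum.inl i) :=
            (NN (pcomp n τ ρ) ι).trans' ((NN (pcomp n τ ρ) ι).symm' hrj) hri
          have hjιi : ι (Sum.inl j) (Sum.inl i) :=
            DPM_NN (pcomp n τ ρ) ι h1 (mem_LL.1 hj).1 hiP hji
          have hjeq : j = i := Ldr_unique (mem_LL.1 hj) (mem_LL.1 hi) hjιi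
          rw [hjeq] at hja
          exact hja
        · intro hx
          have hs : σ1 (Sum.inl i) (Sum.inr s) := (clsB_bt ρ ι hι h2 hi hx s).1 (B.symm' h)
          obtain ⟨r, hr1, hr3⟩ := (pcomp_bt ρ ι).1 hs
          exact ⟨s, r, NN_le_NN' τ ρ ι hr1, hr3, (TpS ρ ⊔ BtS τ).refl' _⟩
      · -- mid s mid s'
        have key : ∀ s s' : Fin n, B (Sum.inr s) (Sum.inr s') →
            (∃ s₀ p, NN (pcomp n τ ρ) ι (Sum.inr p) (Sum.inl i) ∧
              ρ (Sum.inl p) (Sum.inr s₀) ∧ (TpS ρ ⊔ BtS τ) s₀ s) →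
            (∃ s₀ p, NN (pcomp n τ ρ) ι (Sum.inr p) (Sum.inl i) ∧
              ρ (Sum.inl p) (Sum.inr s₀) ∧ (TpS ρ ⊔ BtS τ) s₀ s') := by
          rintro s s' hss ⟨s₀, p, hp, hps₀, hc5⟩
          rcases (pcomp_tt σ1 (pstar n ρ)).1 hss with h' | ⟨pp, qq, hps, hNpq, hqs'⟩
          · -- σ1 (inr s)(inr s')
            rcases (pcomp_tt ρ ι).1 h' with h'' | ⟨r, r', hr, hNN, hr'⟩
            · exact ⟨s₀, p, hp, hps₀,
                (TpS ρ ⊔ BtS τ).trans' hc5 (sup_left' (h'' : ρ _ _))⟩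
            · have hri : NN (pcomp n τ ρ) ι (Sum.inr r) (Sum.inl i) :=
                ATTACH_TR τ ρ ι hp hps₀ hc5 hr
              have hr'i : NN (pcomp n τ ρ) ι (Sum.inr r') (Sum.inl i) :=
                (NN (pcomp n τ ρ) ι).trans'
                  ((NN (pcomp n τ ρ) ι).symm' (NN_le_NN' τ ρ ι hNN)) hri
              exact ⟨s', r', hr'i, hr', (TpS ρ ⊔ BtS τ).refl' _⟩
          · -- through the middle of the B gluing
            obtain ⟨r, hr1, hr3⟩ := (pcomp_bt ρ ι).1 hps
            have hri : NN (pcomp n τ ρ) ι (Sum.inr r) (Sum.inl i) :=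
              ATTACH_TR τ ρ ι hp hps₀ hc5 hr3
            have hpi : NN (pcomp n τ ρ) ι (Sum.inl pp) (Sum.inl i) :=
              (NN (pcomp n τ ρ) ι).trans'
                ((NN (pcomp n τ ρ) ι).symm' (NN_le_NN' τ ρ ι hr1)) hri
            -- transport over the middle connectivity
            have hMpq : (NN (pcomp n τ ρ) ι ⊔ downS (BtS ρ)) (Sum.inl pp) (Sum.inl qq) := by
              have := (upsup_rr (pstar n ρ) (BtS σ1)).1 hNpq
              have hle : (TpS (pstar n ρ) ⊔ BtS σ1) ≤
                  ⟨fun p q => (NN (pcomp n τ ρ) ι ⊔ downS (BtS ρ)) (Sum.inl p) (Sum.inl q),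
                    ⟨fun _ => (NN (pcomp n τ ρ) ι ⊔ downS (BtS ρ)).refl' _,
                      (NN (pcomp n τ ρ) ι ⊔ downS (BtS ρ)).symm',
                      (NN (pcomp n τ ρ) ι ⊔ downS (BtS ρ)).trans'⟩⟩ := by
                refine sup_le ?_ ?_
                · intro p q hpq
                  exact sup_right' (Or.inr ⟨p, q, (hpq : ρ (Sum.inl p) (Sum.inl q)), rfl, rfl⟩)
                · intro p q hpq
                  exact sup_left' (NN_le_NN' τ ρ ι ((pcomp_bb ρ ι).1 (hpq : σ1 _ _)))
              exact hle this
            have hMqi : (NN (pcomp n τ ρ) ι ⊔ downS (BtS ρ)) (Sum.inl qq) (Sum.inl i) :=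
              (NN (pcomp n τ ρ) ι ⊔ downS (BtS ρ)).trans'
                ((NN (pcomp n τ ρ) ι ⊔ downS (BtS ρ)).symm' hMpq) (sup_left' hpi)
            obtain ⟨r'', hr''1, hr''3⟩ := (pcomp_bt ρ ι).1 hqs'
            have hMr'' : (NN (pcomp n τ ρ) ι ⊔ downS (BtS ρ)) (Sum.inr r'') (Sum.inl i) :=
              (NN (pcomp n τ ρ) ι ⊔ downS (BtS ρ)).trans'
                (sup_left' (NN_le_NN' τ ρ ι hr''1)) hMqi
            have := (hMc (Sum.inr r'')).1 hMr''
            exact ⟨s', r'', this, hr''3, (TpS ρ ⊔ BtS τ).refl' _⟩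
        exact ⟨fun hx => key s s' h hx, fun hx => key s' s (B.symm' h) hx⟩
    · -- top generator : τ
      rcases u with s | t <;> rcases v with s' | t' <;>
        simp only [embTop_inl, embTop_inr, Y, Set.mem_def]
      · -- mid s mid s' : τ (inl s)(inl s')
        constructor
        · rintro ⟨s₀, p, hp, hps₀, hc5⟩
          exact ⟨s₀, p, hp, hps₀, (TpS ρ ⊔ BtS τ).trans' hc5 (sup_right' h)⟩
        · rintro ⟨s₀, p, hp, hps₀, hc5⟩
          exact ⟨s₀, p, hp, hps₀, (TpS ρ ⊔ BtS τ).trans' hc5 (sup_right' (τ.symm' h))⟩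
      · -- mid s top t' : τ (inl s)(inr t')
        constructor
        · rintro ⟨s₀, p, hp, hps₀, hc5⟩
          refine (pcomp_bt (pcomp n τ ρ) ι).2 ⟨p, hp, ?_⟩
          have g1 : glue n τ ρ (Sum.inl p) (Sum.inr (Sum.inl s₀)) :=
            glue_of_gen τ ρ (Or.inl ⟨Sum.inl p, Sum.inr s₀, hps₀, rfl, rfl⟩)
          have g2 := midTR τ ρ hc5
          have g3 : glue n τ ρ (Sum.inr (Sum.inl s)) (Sum.inr (Sum.inr t')) :=
            glue_of_gen τ ρ (Or.inr ⟨Sum.inl s, Sum.inr t', h, rfl, rfl⟩)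
          exact (glue n τ ρ).trans' g1 ((glue n τ ρ).trans' g2 g3)
        · intro hx
          obtain ⟨p, hp, hpt⟩ := (pcomp_bt (pcomp n τ ρ) ι).1 hx
          obtain ⟨w, hw1, hw2⟩ := (pcomp_bt τ ρ).1 hpt
          obtain ⟨w₀, hw₀, hcc⟩ := (upsup_lr ρ (BtS τ)).1 ((NN τ ρ).symm' hw1)
          refine ⟨w₀, p, hp, hw₀, (TpS ρ ⊔ BtS τ).trans' hcc (sup_right' ?_)⟩
          exact τ.trans' hw2 (τ.symm' h)
      · -- top t mid s'
        constructor
        · intro hx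
          obtain ⟨p, hp, hpt⟩ := (pcomp_bt (pcomp n τ ρ) ι).1 hx
          obtain ⟨w, hw1, hw2⟩ := (pcomp_bt τ ρ).1 hpt
          obtain ⟨w₀, hw₀, hcc⟩ := (upsup_lr ρ (BtS τ)).1 ((NN τ ρ).symm' hw1)
          refine ⟨w₀, p, hp, hw₀, (TpS ρ ⊔ BtS τ).trans' hcc (sup_right' ?_)⟩
          exact τ.trans' hw2 (τ.symm' (τ.symm' h))
        · rintro ⟨s₀, p, hp, hps₀, hc5⟩
          refine (pcomp_bt (pcomp n τ ρ) ι).2 ⟨p, hp, ?_⟩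
          have g1 : glue n τ ρ (Sum.inl p) (Sum.inr (Sum.inl s₀)) :=
            glue_of_gen τ ρ (Or.inl ⟨Sum.inl p, Sum.inr s₀, hps₀, rfl, rfl⟩)
          have g2 := midTR τ ρ hc5
          have g3 : glue n τ ρ (Sum.inr (Sum.inl s')) (Sum.inr (Sum.inr t)) :=
            glue_of_gen τ ρ (Or.inr ⟨Sum.inl s', Sum.inr t, τ.symm' h, rfl, rfl⟩)
          exact (glue n τ ρ).trans' g1 ((glue n τ ρ).trans' g2 g3)
      · -- top t top t'
        have htt : X (Sum.inr t) (Sum.inr t') :=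
          pcomp_of_top (pcomp n τ ρ) ι (pcomp_of_top τ ρ h)
        exact ⟨fun hx => X.trans' hx htt, fun hx => X.trans' hx (X.symm' htt)⟩
  · exact ha₀
  · -- each element of Y is glue4-related to bot a₀
    set G := glue n τ B with hG
    have hchain : ∀ s₀ p, NN (pcomp n τ ρ) ι (Sum.inr p) (Sum.inl i) →
        ρ (Sum.inl p) (Sum.inr s₀) → G (Sum.inl a₀) (Sum.inr (Sum.inl s₀)) := by
      intro s₀ p hp hps₀
      obtain ⟨t₁, ht₁⟩ := (PROPKEEP ρ ι h2 hiP).2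
      obtain ⟨r, hr1, hr3⟩ := (pcomp_bt ρ ι).1 ht₁
      have hBa : B (Sum.inl a₀) (Sum.inr t₁) := (clsB_bt ρ ι hι h2 hi ha₀ t₁).2 ht₁
      have g1 : G (Sum.inl a₀) (Sum.inr (Sum.inl t₁)) :=
        glue_of_gen τ B (Or.inl ⟨Sum.inl a₀, Sum.inr t₁, hBa, rfl, rfl⟩)
      have hrp : (TpS ι ⊔ BtS (pcomp n τ ρ)) r p := by
        have : NN (pcomp n τ ρ) ι (Sum.inr r) (Sum.inr p) :=
          (NN (pcomp n τ ρ) ι).trans' (NN_le_NN' τ ρ ι hr1)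
            ((NN (pcomp n τ ρ) ι).symm' hp)
        exact (upsup_rr ι (BtS (pcomp n τ ρ))).1 this
      have g2 : G (Sum.inr (Sum.inl t₁)) (Sum.inr (Sum.inl s₀)) :=
        E_bridge τ ρ ι hrp hr3 hps₀
      exact G.trans' g1 g2
    rintro (b | s | t) hz
    · have hb : σ1 (Sum.inl (istar ι i)) (Sum.inr b) := hz
      have hab : B (Sum.inl a₀) (Sum.inl b) := by
        have := (clsB_bb ρ ι hι h2 hi ha₀ b).2 hb
        exact this
      exact glue_of_gen τ B (Or.inl ⟨Sum.inl a₀, Sum.inl b, hab, rfl, rfl⟩)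
    · obtain ⟨s₀, p, hp, hps₀, hc5⟩ := hz
      exact G.trans' (hchain s₀ p hp hps₀) (mid4_of_c5 τ ρ ι hc5)
    · have ht : X (Sum.inl i) (Sum.inr t) := hz
      obtain ⟨p, hp, hpt⟩ := (pcomp_bt (pcomp n τ ρ) ι).1 ht
      obtain ⟨w, hw1, hw2⟩ := (pcomp_bt τ ρ).1 hpt
      obtain ⟨w₀, hw₀, hcc⟩ := (upsup_lr ρ (BtS τ)).1 ((NN τ ρ).symm' hw1)
      have g1 := hchain w₀ p hp hw₀
      have g2 := mid4_of_c5 τ ρ ι hcc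
      have g3 : G (Sum.inr (Sum.inl w)) (Sum.inr (Sum.inr t)) :=
        glue_of_gen τ B (Or.inr ⟨Sum.inl w, Sum.inr t, hw2, rfl, rfl⟩)
      exact G.trans' g1 (G.trans' g2 g3)

end TBSec2
end PP
namespace PP
variable {n : ℕ}

section TBSec3
variable (τ ρ ι : Setoid (DVert n)) (hι : pstar n ι = ι)
  (h2 : prank n (pcomp n ρ ι) = prank n ι)
  (h1 : prank n (pcomp n (pcomp n τ ρ) ι) = prank n ι)
include hι h2 h1

theorem clsTB_bt {i a : Fin n} (hi : i ∈ LL ι)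
    (ha : pcomp n ρ ι (Sum.inl (istar ι i)) (Sum.inr a)) (t : Fin n) :
    pcomp n τ (pcomp n (pcomp n ρ ι) (pstar n ρ)) (Sum.inl a) (Sum.inr t) ↔
      pcomp n (pcomp n τ ρ) ι (Sum.inl i) (Sum.inr t) := by
  have hY := glue4_bot_iff τ ρ ι hι h2 h1 hi ha
  exact hY (Sum.inr (Sum.inr t))

theorem clsTB_bb {i a : Fin n} (hi : i ∈ LL ι)
    (ha : pcomp n ρ ι (Sum.inl (istar ι i)) (Sum.inr a)) (b : Fin n) :
    pcomp n τ (pcomp n (pcomp n ρ ι) (pstar n ρ)) (Sum.inl a) (Sum.inl b) ↔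
      pcomp n ρ ι (Sum.inl (istar ι i)) (Sum.inr b) := by
  have hY := glue4_bot_iff τ ρ ι hι h2 h1 hi ha
  exact hY (Sum.inl b)

theorem clsTB_tt {i t : Fin n} (hi : i ∈ LL ι)
    (ht : pcomp n (pcomp n τ ρ) ι (Sum.inl i) (Sum.inr t))
    {a : Fin n} (ha : pcomp n ρ ι (Sum.inl (istar ι i)) (Sum.inr a)) (t' : Fin n) :
    pcomp n τ (pcomp n (pcomp n ρ ι) (pstar n ρ)) (Sum.inr t) (Sum.inr t') ↔
      pcomp n (pcomp n τ ρ) ι (Sum.inl i) (Sum.inr t') := by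
  set G := glue n τ (pcomp n (pcomp n ρ ι) (pstar n ρ)) with hG
  have hY := glue4_bot_iff τ ρ ι hι h2 h1 hi ha
  have hat : G (Sum.inl a) (Sum.inr (Sum.inr t)) := (hY (Sum.inr (Sum.inr t))).2 ht
  constructor
  · intro h
    have h' : G (Sum.inr (Sum.inr t)) (Sum.inr (Sum.inr t')) := h
    exact (hY (Sum.inr (Sum.inr t'))).1 (G.trans' hat h')
  · intro h
    exact G.trans' (G.symm' hat) ((hY (Sum.inr (Sum.inr t'))).2 h)

theorem proppairTB {a t : Fin n}
    (h : pcomp n τ (pcomp n (pcomp n ρ ι) (pstar n ρ)) (Sum.inl a) (Sum.inr t)) :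
    ∃ i ∈ LL ι, pcomp n ρ ι (Sum.inl (istar ι i)) (Sum.inr a) ∧
      pcomp n (pcomp n τ ρ) ι (Sum.inl i) (Sum.inr t) := by
  obtain ⟨s, hs⟩ := pcomp_bt_exists τ (pcomp n (pcomp n ρ ι) (pstar n ρ)) h
  obtain ⟨i, hi, hia, _⟩ := proppairB ρ ι hι h2 hs
  have hY := glue4_bot_iff τ ρ ι hι h2 h1 hi hia
  have : (Sum.inr (Sum.inr t) : TVert n) ∈ Y τ ρ ι i := (hY (Sum.inr (Sum.inr t))).1 h
  exact ⟨i, hi, hia, this⟩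

theorem LdrTB_iff (j : Fin n) :
    Ldr (pcomp n τ (pcomp n (pcomp n ρ ι) (pstar n ρ))) j ↔ Rdr (pcomp n ρ ι) j := by
  set σ1 := pcomp n ρ ι with hσ1
  set TB := pcomp n τ (pcomp n (pcomp n ρ ι) (pstar n ρ)) with hTB
  constructor
  · rintro ⟨hP, hmin⟩
    obtain ⟨t, ht⟩ := hP.2
    obtain ⟨i, hi, hja, _⟩ := proppairTB τ ρ ι hι h2 h1 ht
    refine ⟨⟨⟨istar ι i, σ1.symm' hja⟩, ⟨j, σ1.refl' _⟩⟩, ?_⟩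
    intro t' ht'
    have hb : σ1 (Sum.inl (istar ι i)) (Sum.inr t') := σ1.trans' hja ht'
    exact hmin t' ((clsTB_bb τ ρ ι hι h2 h1 hi hja t').2 hb)
  · rintro ⟨hP, hmin⟩
    obtain ⟨p, hp⟩ := hP.1
    obtain ⟨i', hi', hi't⟩ := exists_leader_bt_gen ρ ι (σ1.symm' hp)
    have hii : istar ι (istar ι i') = i' := istar_istar ι hι hi'
    have histar : istar ι i' ∈ LL ι := istar_mem ι hι hi'
    have hja : σ1 (Sum.inl (istar ι (istar ι i'))) (Sum.inr j) := by rw [hii]; exact hi't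
    obtain ⟨t₀, ht₀⟩ := (PROPKEEP (pcomp n τ ρ) ι h1 (mem_LL.1 histar).1).2
    refine ⟨⟨⟨j, TB.refl' _⟩, ⟨t₀, ?_⟩⟩, ?_⟩
    · exact (clsTB_bt τ ρ ι hι h2 h1 histar hja t₀).2 ht₀
    · intro b hb
      have h1' : σ1 (Sum.inl (istar ι (istar ι i'))) (Sum.inr b) :=
        (clsTB_bb τ ρ ι hι h2 h1 histar hja b).1 hb
      exact hmin b (σ1.trans' (σ1.symm' hja) h1')

theorem RdrTB_iff (j : Fin n) :
    Rdr (pcomp n τ (pcomp n (pcomp n ρ ι) (pstar n ρ))) j ↔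
      Rdr (pcomp n (pcomp n τ ρ) ι) j := by
  set σ1 := pcomp n ρ ι with hσ1
  set X := pcomp n (pcomp n τ ρ) ι with hX
  set TB := pcomp n τ (pcomp n (pcomp n ρ ι) (pstar n ρ)) with hTB
  constructor
  · rintro ⟨hP, hmin⟩
    obtain ⟨a, ha⟩ := hP.1
    obtain ⟨i, hi, hia, hit⟩ := proppairTB τ ρ ι hι h2 h1 (TB.symm' ha)
    refine ⟨⟨⟨i, X.symm' hit⟩, ⟨j, X.refl' _⟩⟩, ?_⟩
    intro t' ht'
    have h1' : X (Sum.inl i) (Sum.inr t') := X.trans' hit ht'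
    exact hmin t' ((clsTB_tt τ ρ ι hι h2 h1 hi hit hia t').2 h1')
  · rintro ⟨hP, hmin⟩
    obtain ⟨p, hp⟩ := hP.1
    obtain ⟨i, hi, hit⟩ := exists_leader_bt_gen (pcomp n τ ρ) ι (X.symm' hp)
    have histar : istar ι i ∈ LL ι := istar_mem ι hι hi
    obtain ⟨a₀, ha₀⟩ := (PROPKEEP ρ ι h2 (mem_LL.1 histar).1).2
    refine ⟨⟨⟨a₀, ?_⟩, ⟨j, TB.refl' _⟩⟩, ?_⟩
    · exact TB.symm' ((clsTB_bt τ ρ ι hι h2 h1 hi ha₀ j).2 hit)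
    · intro t' ht'
      have h1' : X (Sum.inl i) (Sum.inr t') :=
        (clsTB_tt τ ρ ι hι h2 h1 hi hit ha₀ t').1 ht'
      exact hmin t' (X.trans' (X.symm' hit) h1')

theorem LL_TB_eq : LL (pcomp n τ (pcomp n (pcomp n ρ ι) (pstar n ρ))) = RR (pcomp n ρ ι) := by
  ext j
  rw [mem_LL, mem_RR]
  exact LdrTB_iff τ ρ ι hι h2 h1 j

theorem RR_TB_eq : RR (pcomp n τ (pcomp n (pcomp n ρ ι) (pstar n ρ))) =
    RR (pcomp n (pcomp n τ ρ) ι) := by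
  ext j
  rw [mem_RR, mem_RR]
  exact RdrTB_iff τ ρ ι hι h2 h1 j

end TBSec3
end PP
namespace PP
variable {n : ℕ}

theorem lR_pi (σ : Setoid (DVert n)) (x : DVert n) (h h' : ∃ j, σ x (Sum.inr j)) :
    lR σ x h = lR σ x h' := rfl

theorem permAt_val (σ : Setoid (DVert n)) (k : ℕ) (hk : prank n σ = k) {i : Fin n}
    (hi : i ∈ LL σ) (x : Fin k) (hx : (x : ℕ) = rkf (LL σ) i)
    (h' : ∃ j, σ (Sum.inl i) (Sum.inr j)) :
    ((permAt n k σ x : Fin k) : ℕ) = rkf (RR σ) (lR σ (Sum.inl i) h') := by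
  have hlt : rkf (LL σ) i < k := hx ▸ x.isLt
  have hxx : x = ⟨rkf (LL σ) i, hlt⟩ := Fin.ext hx
  rw [hxx, lR_pi σ (Sum.inl i) h' (mem_LL.1 hi).1.2]
  exact permAt_char σ hk hi hlt

section Final
variable (τ ρ ι : Setoid (DVert n)) (hι : pstar n ι = ι)
  (h2 : prank n (pcomp n ρ ι) = prank n ι)
  (h1 : prank n (pcomp n (pcomp n τ ρ) ι) = prank n ι)
include hι h2 h1

theorem prank_B_eq : prank n (pcomp n (pcomp n ρ ι) (pstar n ρ)) = prank n ι := by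
  rw [prank_eq_card_LL, LL_B_eq ρ ι hι h2, ← prank_eq_card_RR, h2]

theorem prank_TB_eq :
    prank n (pcomp n τ (pcomp n (pcomp n ρ ι) (pstar n ρ))) = prank n ι := by
  rw [prank_eq_card_LL, LL_TB_eq τ ρ ι hι h2 h1, ← prank_eq_card_RR, h2]

theorem LRB' {i a' : Fin n} (hi : i ∈ LL ι)
    (ha' : pcomp n ρ ι (Sum.inl (istar ι i)) (Sum.inr a'))
    (hB : ∃ t, pcomp n (pcomp n ρ ι) (pstar n ρ) (Sum.inl a') (Sum.inr t))
    (hC : ∃ t, pcomp n ρ ι (Sum.inl i) (Sum.inr t)) :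
    lR (pcomp n (pcomp n ρ ι) (pstar n ρ)) (Sum.inl a') hB =
      lR (pcomp n ρ ι) (Sum.inl i) hC :=
  lR_congr hB hC (fun t => clsB_bt ρ ι hι h2 hi ha' t)

theorem LRTB' {i a' : Fin n} (hi : i ∈ LL ι)
    (ha' : pcomp n ρ ι (Sum.inl (istar ι i)) (Sum.inr a'))
    (hB : ∃ t, pcomp n τ (pcomp n (pcomp n ρ ι) (pstar n ρ)) (Sum.inl a') (Sum.inr t))
    (hC : ∃ t, pcomp n (pcomp n τ ρ) ι (Sum.inl i) (Sum.inr t)) :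
    lR (pcomp n τ (pcomp n (pcomp n ρ ι) (pstar n ρ))) (Sum.inl a') hB =
      lR (pcomp n (pcomp n τ ρ) ι) (Sum.inl i) hC :=
  lR_congr hB hC (fun t => clsTB_bt τ ρ ι hι h2 h1 hi ha' t)

end Final
end PP

open PP

/-- for `ι` `⋆`-self-dual with `r(τ∘ρ∘ι) = r(ρ∘ι) = r(ι)`, the permutations
recording the propagating-line connections satisfy
`π_{τ∘ρ∘ι} π_ι = π_{τ∘(ρ∘ι∘ρ⋆)} π_{ρ∘ι∘ρ⋆} π_{ρ∘ι} π_ι` in `S_{r(ι)}`. -/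
theorem perm_cocycle (n : ℕ) (τ ρ ι : Setoid (DVert n)) (hι : pstar n ι = ι)
    (h1 : prank n (pcomp n (pcomp n τ ρ) ι) = prank n ι)
    (h2 : prank n (pcomp n ρ ι) = prank n ι) :
    permAt n (prank n ι) (pcomp n (pcomp n τ ρ) ι) * permAt n (prank n ι) ι =
      permAt n (prank n ι) (pcomp n τ (pcomp n (pcomp n ρ ι) (pstar n ρ))) *
        permAt n (prank n ι) (pcomp n (pcomp n ρ ι) (pstar n ρ)) *
        permAt n (prank n ι) (pcomp n ρ ι) *
        permAt n (prank n ι) ι := by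
  apply Equiv.ext
  intro x
  simp only [Equiv.Perm.mul_apply]
  apply Fin.ext
  obtain ⟨a, haS, hrka⟩ := rkf_surj (prank_eq_card_LL ι).symm x
  have haS' : istar ι a ∈ LL ι := istar_mem ι hι haS
  -- step 0 : π_ι on both sides
  have hPa : ∃ j, ι (Sum.inl a) (Sum.inr j) := (mem_LL.1 haS).1.2
  have hy1 : ((permAt n (prank n ι) ι x : Fin _) : ℕ) = rkf (LL ι) (istar ι a) := by
    have h0 := permAt_val ι (prank n ι) rfl haS x hrka.symm hPa
    rw [RR_eq_LL ι hι, istar_eq_lR ι hPa] at h0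
    exact h0
  set y1 := permAt n (prank n ι) ι x with hy1def
  -- propagation facts
  have hPσa : ∃ t, pcomp n ρ ι (Sum.inl (istar ι a)) (Sum.inr t) :=
    (PROPKEEP ρ ι h2 (mem_LL.1 haS').1).2
  have hPσa' : ∃ t, pcomp n ρ ι (Sum.inl a) (Sum.inr t) :=
    (PROPKEEP ρ ι h2 (mem_LL.1 haS).1).2
  have hPXa : ∃ t, pcomp n (pcomp n τ ρ) ι (Sum.inl (istar ι a)) (Sum.inr t) :=
    (PROPKEEP (pcomp n τ ρ) ι h1 (mem_LL.1 haS').1).2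
  -- LHS : π_X at y1
  have hLHS : ((permAt n (prank n ι) (pcomp n (pcomp n τ ρ) ι) y1 : Fin _) : ℕ) =
      rkf (RR (pcomp n (pcomp n τ ρ) ι))
        (lR (pcomp n (pcomp n τ ρ) ι) (Sum.inl (istar ι a)) hPXa) := by
    refine permAt_val _ _ h1 ?_ y1 ?_ hPXa
    · rw [LL_comp_eq (pcomp n τ ρ) ι h1]; exact haS'
    · rw [LL_comp_eq (pcomp n τ ρ) ι h1]; exact hy1
  -- RHS step 1 : π_σ1 at y1
  have hy2 : ((permAt n (prank n ι) (pcomp n ρ ι) y1 : Fin _) : ℕ) =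
      rkf (RR (pcomp n ρ ι)) (lR (pcomp n ρ ι) (Sum.inl (istar ι a)) hPσa) := by
    refine permAt_val _ _ h2 ?_ y1 ?_ hPσa
    · rw [LL_comp_eq ρ ι h2]; exact haS'
    · rw [LL_comp_eq ρ ι h2]; exact hy1
  set y2 := permAt n (prank n ι) (pcomp n ρ ι) y1 with hy2def
  -- RHS step 2 : π_B at y2
  have hj1R : Rdr (pcomp n ρ ι) (lR (pcomp n ρ ι) (Sum.inl (istar ι a)) hPσa) :=
    Rdr_lR (pcomp n ρ ι) (Sum.inl (istar ι a)) (PROPKEEP ρ ι h2 (mem_LL.1 haS').1) hPσa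
  have hj1LB : lR (pcomp n ρ ι) (Sum.inl (istar ι a)) hPσa ∈
      LL (pcomp n (pcomp n ρ ι) (pstar n ρ)) := by
    rw [LL_B_eq ρ ι hι h2]; exact mem_RR.2 hj1R
  have hPBj1 : ∃ t, pcomp n (pcomp n ρ ι) (pstar n ρ)
      (Sum.inl (lR (pcomp n ρ ι) (Sum.inl (istar ι a)) hPσa)) (Sum.inr t) :=
    (mem_LL.1 hj1LB).1.2
  have hy3 : ((permAt n (prank n ι) (pcomp n (pcomp n ρ ι) (pstar n ρ)) y2 : Fin _) : ℕ) =
      rkf (RR (pcomp n ρ ι)) (lR (pcomp n ρ ι) (Sum.inl a) hPσa') := by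
    have h0 := permAt_val _ _ (prank_B_eq τ ρ ι hι h2 h1) hj1LB y2
      (by rw [LL_B_eq ρ ι hι h2]; exact hy2) hPBj1
    rw [RR_B_eq ρ ι hι h2,
      LRB' τ ρ ι hι h2 h1 haS (lR_rel (pcomp n ρ ι) (Sum.inl (istar ι a)) hPσa) hPBj1 hPσa'] at h0
    exact h0
  set y3 := permAt n (prank n ι) (pcomp n (pcomp n ρ ι) (pstar n ρ)) y2 with hy3def
  -- RHS step 3 : π_τB at y3
  have hj2R : Rdr (pcomp n ρ ι) (lR (pcomp n ρ ι) (Sum.inl a) hPσa') :=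
    Rdr_lR (pcomp n ρ ι) (Sum.inl a) (PROPKEEP ρ ι h2 (mem_LL.1 haS).1) hPσa'
  have hj2LTB : lR (pcomp n ρ ι) (Sum.inl a) hPσa' ∈
      LL (pcomp n τ (pcomp n (pcomp n ρ ι) (pstar n ρ))) := by
    rw [LL_TB_eq τ ρ ι hι h2 h1]; exact mem_RR.2 hj2R
  have hPTBj2 : ∃ t, pcomp n τ (pcomp n (pcomp n ρ ι) (pstar n ρ))
      (Sum.inl (lR (pcomp n ρ ι) (Sum.inl a) hPσa')) (Sum.inr t) :=
    (mem_LL.1 hj2LTB).1.2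
  have ha'2 : pcomp n ρ ι (Sum.inl (istar ι (istar ι a)))
      (Sum.inr (lR (pcomp n ρ ι) (Sum.inl a) hPσa')) := by
    rw [istar_istar ι hι haS]
    exact lR_rel (pcomp n ρ ι) (Sum.inl a) hPσa'
  have hy4 : ((permAt n (prank n ι) (pcomp n τ (pcomp n (pcomp n ρ ι) (pstar n ρ))) y3 :
      Fin _) : ℕ) =
      rkf (RR (pcomp n (pcomp n τ ρ) ι))
        (lR (pcomp n (pcomp n τ ρ) ι) (Sum.inl (istar ι a)) hPXa) := by
    have h0 := permAt_val _ _ (prank_TB_eq τ ρ ι hι h2 h1) hj2LTB y3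
      (by rw [LL_TB_eq τ ρ ι hι h2 h1]; exact hy3) hPTBj2
    rw [RR_TB_eq τ ρ ι hι h2 h1,
      LRTB' τ ρ ι hι h2 h1 haS' ha'2 hPTBj2 hPXa] at h0
    exact h0
  rw [hLHS, hy4]

end
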